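/- arXiv:1101.1020 — 7 statements merged into one kernel-verified Lean document; each statement's English description precedes it below -/
import Mathlib

section
/- For formal power series: if Q(z) = z·(1 − x·z − (y₁+y₂)·z²/(1−z)) and P is the compositional inverse of Q (as a power series in z over the ring of polynomials in x, y₁, y₂), then for N ≥ 1, the coefficient of z^{N−1} in (Q(z)/z)^{−N} equals the sum over k, ℓ, m with k + 2(ℓ+m) ≤ N−1 of multinomial(N−1+k+ℓ+m; N−1,k,ℓ,m)·binomial(N−2−k−ℓ−m, ℓ+m−1)·x^k y₁^ℓ y₂^m. -/
/- The multinomial coefficient (a+b+c+d)! / (a! b! c! d!). -/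
def mult4 (a b c d : ℕ) : ℕ :=
  (a + b + c + d).factorial / (a.factorial * b.factorial * c.factorial * d.factorial)

/- Binomial coefficient on integers with the paper's convention binomial(n, n) = 1
for all integers n (including negative n); otherwise 0 when b < 0 or b > a. -/
def binP (a b : ℤ) : ℤ :=
  if a = b then 1 else if 0 ≤ b ∧ b ≤ a then (a.toNat).choose b.toNat else 0

noncomputable section

abbrev R3 : Type := MvPolynomial (Fin 3) ℚ

/- The exponent vector of the monomial x^k y₁^ℓ y₂^m. -/
def mon (k l m : ℕ) : Fin 3 →₀ ℕ :=
  Finsupp.single 0 k + Finsupp.single 1 l + Finsupp.single 2 m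

namespace CIPaux

lemma reindex {M : Type*} [AddCommMonoid M] (N : ℕ) (G : ℕ → ℕ → ℕ → M)
    (hG : ∀ k l m, N ≤ k + l + m → G k l m = 0) :
    ∑ j ∈ Finset.range N, ∑ a ∈ Finset.range (j+1), ∑ l ∈ Finset.range (j - a + 1),
        G a l (j - a - l)
      = ∑ k ∈ Finset.range N, ∑ l ∈ Finset.range N, ∑ m ∈ Finset.range N, G k l m := by
  have hR : ∑ k ∈ Finset.range N, ∑ l ∈ Finset.range N, ∑ m ∈ Finset.range N, G k l m
      = ∑ q ∈ (Finset.range N ×ˢ Finset.range N ×ˢ Finset.range N).filter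
          (fun q => q.1 + q.2.1 + q.2.2 < N), G q.1 q.2.1 q.2.2 := by
    rw [Finset.sum_filter]
    rw [Finset.sum_product]
    refine Finset.sum_congr rfl fun k _ => ?_
    rw [Finset.sum_product]
    refine Finset.sum_congr rfl fun l _ => Finset.sum_congr rfl fun m _ => ?_
    by_cases h : k + l + m < N
    · simp [h]
    · simp [h, hG k l m (not_lt.mp h)]
  rw [hR]
  have hL : ∀ j : ℕ, ∑ a ∈ Finset.range (j+1), ∑ l ∈ Finset.range (j - a + 1),
        G a l (j - a - l)
      = ∑ p ∈ (Finset.range (j+1)).sigma (fun a => Finset.range (j - a + 1)),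
          G p.1 p.2 (j - p.1 - p.2) := fun j => by
    rw [Finset.sum_sigma]
  calc ∑ j ∈ Finset.range N, ∑ a ∈ Finset.range (j+1), ∑ l ∈ Finset.range (j - a + 1),
        G a l (j - a - l)
      = ∑ p ∈ (Finset.range N).sigma
          (fun j => (Finset.range (j+1)).sigma fun a => Finset.range (j - a + 1)),
          G p.2.1 p.2.2 (p.1 - p.2.1 - p.2.2) := by
        rw [Finset.sum_sigma]
        exact Finset.sum_congr rfl fun j _ => hL j
    _ = ∑ q ∈ (Finset.range N ×ˢ Finset.range N ×ˢ Finset.range N).filter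
          (fun q => q.1 + q.2.1 + q.2.2 < N), G q.1 q.2.1 q.2.2 := by
        refine Finset.sum_nbij' (i := fun p => (p.2.1, p.2.2, p.1 - p.2.1 - p.2.2))
          (j := fun q => ⟨q.1 + q.2.1 + q.2.2, q.1, q.2.1⟩) ?_ ?_ ?_ ?_ ?_
        · rintro ⟨j, a, l⟩ hp
          simp only [Finset.mem_sigma, Finset.mem_range] at hp
          simp only [Finset.mem_filter, Finset.mem_product, Finset.mem_range]
          omega
        · rintro ⟨k, l, m⟩ hq
          simp only [Finset.mem_filter, Finset.mem_product, Finset.mem_range] at hq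
          simp only [Finset.mem_sigma, Finset.mem_range]
          omega
        · rintro ⟨j, a, l⟩ hp
          simp only [Finset.mem_sigma, Finset.mem_range] at hp
          simp only [Sigma.mk.inj_iff]
          exact ⟨by omega, HEq.rfl⟩
        · rintro ⟨k, l, m⟩ hq
          simp only [Finset.mem_filter, Finset.mem_product, Finset.mem_range] at hq
          have h1 : k + l + m - k - l = m := by omega
          simp [h1]
        · rintro ⟨j, a, l⟩ hp
          rfl

lemma coeff_X_pow_mul_of_lt {R : Type*} [CommRing R] (φ : PowerSeries R) {m n : ℕ} (h : m < n) :
    PowerSeries.coeff (R := R) m (PowerSeries.X ^ n * φ) = 0 := by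
  rw [PowerSeries.coeff_mul]
  refine Finset.sum_eq_zero fun p hp => ?_
  rw [Finset.HasAntidiagonal.mem_antidiagonal] at hp
  rw [PowerSeries.coeff_X_pow, if_neg (by omega), zero_mul]

lemma coeff_X_pow_mul' {R : Type*} [CommRing R] (φ : PowerSeries R) (e n : ℕ) :
    PowerSeries.coeff (R := R) n (PowerSeries.X ^ e * φ)
      = if e ≤ n then PowerSeries.coeff (R := R) (n - e) φ else 0 := by
  split_ifs with h
  · rw [show n = (n - e) + e by omega, PowerSeries.coeff_X_pow_mul,
      Nat.add_sub_cancel]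
  · exact coeff_X_pow_mul_of_lt φ (by omega)

lemma coeff_mul_congr {R : Type*} [CommRing R] (a a' c : PowerSeries R) (i : ℕ)
    (h : ∀ q ≤ i, PowerSeries.coeff (R := R) q a = PowerSeries.coeff (R := R) q a') :
    PowerSeries.coeff (R := R) i (a * c) = PowerSeries.coeff (R := R) i (a' * c) := by
  rw [PowerSeries.coeff_mul, PowerSeries.coeff_mul]
  refine Finset.sum_congr rfl fun p hp => ?_
  rw [Finset.HasAntidiagonal.mem_antidiagonal] at hp
  rw [h p.1 (by omega)]

lemma U_pow_eq {R : Type*} [CommRing R] (U : PowerSeries R)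
    (hU : U * (1 - PowerSeries.X) = 1) (p : ℕ) :
    U ^ p = (PowerSeries.invOneSubPow R p).val := by
  have h : U ^ p * ((PowerSeries.invOneSubPow R p).inv) = 1 := by
    rw [PowerSeries.invOneSubPow_inv_eq_one_sub_pow, ← mul_pow, hU, one_pow]
  calc U ^ p = U ^ p * ((PowerSeries.invOneSubPow R p).inv
        * (PowerSeries.invOneSubPow R p).val) := by
        rw [Units.inv_eq_val_inv] at *
        rw [Units.inv_mul, mul_one]
    _ = (PowerSeries.invOneSubPow R p).val := by rw [← mul_assoc, h, one_mul]

lemma coeff_U_pow {R : Type*} [CommRing R] (U : PowerSeries R)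
    (hU : U * (1 - PowerSeries.X) = 1) (p i : ℕ) (hp : 0 < p) :
    PowerSeries.coeff (R := R) i (U ^ p) = (Nat.choose (p - 1 + i) (p - 1) : R) := by
  rw [U_pow_eq U hU p, PowerSeries.invOneSubPow_val_eq_mk_sub_one_add_choose_of_pos _ _ hp,
    PowerSeries.coeff_mk]

lemma pol_trunc (N : ℕ) (hN : 1 ≤ N) :
    ∃ g : Polynomial ℚ,
      (1 : Polynomial ℚ)
        - (∑ j ∈ Finset.range N, (Nat.choose (N-1+j) j : ℚ) • Polynomial.X ^ j)
          * (1 - Polynomial.X) ^ N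
      = Polynomial.X ^ N * g := by
  set t : Polynomial ℚ := ∑ j ∈ Finset.range N, (Nat.choose (N-1+j) j : ℚ) • Polynomial.X ^ j
    with ht
  set f : Polynomial ℚ := 1 - t * (1 - Polynomial.X) ^ N with hf
  have hcf : ∀ i < N, f.coeff i = 0 := by
    intro i hi
    have h1 : (↑f : PowerSeries ℚ)
        = 1 - (↑t : PowerSeries ℚ) * (1 - PowerSeries.X) ^ N := by
      rw [hf]
      push_cast
      ring
    have h2 : PowerSeries.coeff (R := ℚ) i ((↑t : PowerSeries ℚ) * (1 - PowerSeries.X) ^ N)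
        = PowerSeries.coeff (R := ℚ) i ((PowerSeries.invOneSubPow ℚ N).val * (1 - PowerSeries.X) ^ N) := by
      apply coeff_mul_congr
      intro q hq
      have hqN : q < N := lt_of_le_of_lt hq hi
      rw [PowerSeries.invOneSubPow_val_eq_mk_sub_one_add_choose_of_pos _ _ hN,
        PowerSeries.coeff_mk]
      rw [ht]
      push_cast
      rw [Polynomial.finset_sum_coeff]
      simp only [Polynomial.coeff_smul, Polynomial.coeff_X_pow, smul_eq_mul, mul_ite,
        mul_one, mul_zero]
      rw [Finset.sum_ite_eq (Finset.range N) q (fun j => (Nat.choose (N-1+j) j : ℚ))]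
      rw [if_pos (Finset.mem_range.mpr hqN)]
      norm_cast
      exact Nat.choose_symm_of_eq_add (by omega)
    have h3 : (PowerSeries.invOneSubPow ℚ N).val * (1 - PowerSeries.X) ^ N = 1 := by
      have := (PowerSeries.invOneSubPow ℚ N).val_inv
      rwa [PowerSeries.invOneSubPow_inv_eq_one_sub_pow] at this
    have h4 : PowerSeries.coeff (R := ℚ) i (↑f : PowerSeries ℚ) = 0 := by
      rw [h1, map_sub, h2, h3, sub_self]
    rwa [Polynomial.coeff_coe] at h4
  have hdvd : Polynomial.X ^ N ∣ f := (Polynomial.X_pow_dvd_iff).mpr hcf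
  obtain ⟨g, hg⟩ := hdvd
  exact ⟨g, hg⟩

lemma choose3 (a b c d : ℕ) :
    (a + b + c + d).choose (b + c + d) * ((b + c + d).choose b * (c + d).choose c)
      * (a.factorial * b.factorial * c.factorial * d.factorial)
    = (a + b + c + d).factorial := by
  have h1 := Nat.add_choose_mul_factorial_mul_factorial a (b + c + d)
  have h2 := Nat.add_choose_mul_factorial_mul_factorial (c + d) b
  have h3 := Nat.add_choose_mul_factorial_mul_factorial d c
  rw [show d + c = c + d by ring] at h3
  have e2 : c + d + b = b + c + d := by ring
  have e1 : a + (b + c + d) = a + b + c + d := by ring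
  rw [e2] at h2
  rw [e1] at h1
  calc (a + b + c + d).choose (b + c + d) * ((b + c + d).choose b * (c + d).choose c)
      * (a.factorial * b.factorial * c.factorial * d.factorial)
      = ((b + c + d).choose b * ((c + d).choose c * (d.factorial * c.factorial))
          * b.factorial) * ((a + b + c + d).choose (b+c+d) * a.factorial) := by ring
    _ = ((b + c + d).choose b * (c+d).factorial * b.factorial)
          * ((a + b + c + d).choose (b+c+d) * a.factorial) := by
        rw [show (c + d).choose c * (d.factorial * c.factorial) = (c+d).factorial by
          rw [← h3]; ring]
    _ = (b+c+d).factorial * ((a + b + c + d).choose (b+c+d) * a.factorial) := by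
        rw [← h2]
    _ = (a+b+c+d).factorial := by rw [← h1]; ring_nf

lemma mult4_eq (a b c d : ℕ) :
    mult4 a b c d
      = (a + b + c + d).choose (b + c + d) * ((b + c + d).choose b * (c + d).choose c) := by
  have h := choose3 a b c d
  have hpos : 0 < a.factorial * b.factorial * c.factorial * d.factorial := by positivity
  rw [mult4, ← h, Nat.mul_div_cancel _ hpos]

lemma binP_eq (N a l m : ℕ) (hN : 1 ≤ N) (hp : 1 ≤ l + m) (hc : a + 2*(l+m) ≤ N - 1) :
    binP ((N:ℤ) - 2 - a - l - m) ((l:ℤ) + m - 1) = (Nat.choose (N-2-a-l-m) (l+m-1) : ℤ) := by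
  have h1 : ((N:ℤ) - 2 - a - l - m) = ((N-2-a-l-m : ℕ) : ℤ) := by omega
  have h2 : ((l:ℤ) + m - 1) = ((l+m-1 : ℕ) : ℤ) := by omega
  rw [binP, h1, h2]
  split_ifs with h h'
  · have : N-2-a-l-m = l+m-1 := by exact_mod_cast h
    rw [this, Nat.choose_self]; rfl
  · rw [Int.toNat_natCast, Int.toNat_natCast]
  · exfalso
    apply h'
    constructor
    · positivity
    · exact_mod_cast Nat.cast_le.mpr (by omega)

lemma binP_neg_one (c : ℤ) : binP c (-1) = if c = -1 then 1 else 0 := by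
  rw [binP]
  split_ifs with h h'
  · rfl
  · omega
  · rfl

def uval (N e p : ℕ) : ℚ :=
  if e ≤ N - 1 then
    (if p = 0 then (if e = N - 1 then 1 else 0)
     else (Nat.choose (p - 1 + (N - 1 - e)) (p - 1) : ℚ))
  else 0

lemma term_scalar (N k l m : ℕ) (hN : 1 ≤ N) :
    (Nat.choose (N-1+(k+l+m)) (k+l+m) : ℚ) * (Nat.choose (k+l+m) k : ℚ)
        * (Nat.choose (l+m) l : ℚ) * uval N (k + 2*(l+m)) (l+m)
      = (if k + 2*(l + m) ≤ N-1 then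
          (mult4 (N-1) k l m : ℚ) *
            (binP ((N:ℤ) - 2 - k - l - m) ((l:ℤ) + m - 1) : ℚ)
         else 0) := by
  rw [uval]
  by_cases hcond : k + 2*(l+m) ≤ N - 1
  · rw [if_pos hcond, if_pos hcond]
    by_cases hp : l + m = 0
    · have hl0 : l = 0 := by omega
      have hm0 : m = 0 := by omega
      subst hl0; subst hm0
      rw [if_pos hp]
      have hb : binP ((N:ℤ) - 2 - k - 0 - 0) ((0:ℤ) + 0 - 1)
          = if (N:ℤ) - 2 - k = -1 then 1 else 0 := by
        rw [show ((N:ℤ) - 2 - k - 0 - 0) = (N:ℤ) - 2 - k by ring,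
          show ((0:ℤ) + 0 - 1) = -1 by ring, binP_neg_one]
      push_cast at hb ⊢
      rw [hb]
      by_cases hA : k = N - 1
      · subst hA
        rw [if_pos (by omega), if_pos (by omega)]
        have h4 : mult4 (N-1) (N-1) 0 0 = (N-1+(N-1+0+0)).choose (N-1+0+0) := by
          rw [mult4_eq]; simp
        rw [h4]
        push_cast
        simp
      · rw [if_neg (by omega), if_neg (by omega)]
        simp
    · rw [if_neg hp]
      have h1 : binP ((N:ℤ) - 2 - k - l - m) ((l:ℤ) + m - 1)
          = (Nat.choose (N-2-k-l-m) (l+m-1) : ℤ) := binP_eq N k l m hN (by omega) hcond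
      rw [h1]
      have h2 : l + m - 1 + (N - 1 - (k + 2*(l+m))) = N-2-k-l-m := by omega
      rw [h2]
      have h3 : mult4 (N-1) k l m
          = (N-1+(k+l+m)).choose (k+l+m) * ((k+l+m).choose k * (l+m).choose l) := by
        rw [mult4_eq]
        rw [show N-1+k+l+m = N-1+(k+l+m) by omega]
      rw [h3]
      push_cast
      ring
  · rw [if_neg hcond, if_neg hcond, mul_zero]

end CIPaux

open CIPaux

/-- With `Q(z) = z·(1 − x·z − (y₁+y₂)·z²/(1−z))`, so that
`Q(z)/z = 1 − x·z − (y₁+y₂)·z²/(1−z) =: A` (where `U = (1−z)⁻¹`), and `B = A^{−N}`,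
the coefficient of `z^{N−1}` in `B = (Q(z)/z)^{−N}` equals the sum over `k, ℓ, m` with
`k + 2(ℓ+m) ≤ N−1` of
`multinomial(N−1+k+ℓ+m; N−1,k,ℓ,m)·binomial(N−2−k−ℓ−m, ℓ+m−1)·x^k y₁^ℓ y₂^m`. -/
theorem coeff_inverse_power
    (U : PowerSeries R3) (hU : U * (1 - PowerSeries.X) = 1)
    (A : PowerSeries R3)
    (hA : A = 1 - PowerSeries.C (R := R3) (MvPolynomial.X 0) * PowerSeries.X
      - PowerSeries.C (R := R3) (MvPolynomial.X 1 + MvPolynomial.X 2) * PowerSeries.X ^ 2 * U)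
    (N : ℕ) (hN : 1 ≤ N)
    (B : PowerSeries R3) (hB : B * A ^ N = 1) :
    PowerSeries.coeff (R := R3) (N - 1) B =
      ∑ k ∈ Finset.range N, ∑ l ∈ Finset.range N, ∑ m ∈ Finset.range N,
        if k + 2 * (l + m) ≤ N - 1 then
          MvPolynomial.monomial (mon k l m)
            ((mult4 (N - 1) k l m : ℚ) *
              (binP ((N : ℤ) - 2 - k - l - m) ((l : ℤ) + m - 1) : ℚ))
        else 0 := by
  classical
  set x : R3 := MvPolynomial.X 0 with hx
  set y12 : R3 := MvPolynomial.X 1 + MvPolynomial.X 2 with hy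
  set S : PowerSeries R3 := PowerSeries.C (R := R3) x * PowerSeries.X
      + PowerSeries.C (R := R3) y12 * PowerSeries.X ^ 2 * U with hS
  have hAS : A = 1 - S := by rw [hA, hS]; ring
  set T : PowerSeries R3 := ∑ j ∈ Finset.range N, (Nat.choose (N-1+j) j : ℚ) • S ^ j with hT
  -- Step 1: truncation
  obtain ⟨g, hg⟩ := pol_trunc N hN
  set gS : PowerSeries R3 := Polynomial.aeval S g with hgS
  have hkey : (1 : PowerSeries R3) - T * (1 - S) ^ N = S ^ N * gS := by
    have h := congrArg (Polynomial.aeval S) hg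
    simpa [map_sub, map_one, map_mul, map_pow, map_sum, map_smul, Polynomial.aeval_X,
      hT, hgS] using h
  have h6 : B - T = PowerSeries.X ^ N
      * ((PowerSeries.C (R := R3) x + PowerSeries.C (R := R3) y12 * PowerSeries.X * U) ^ N * (B * gS)) := by
    calc B - T = B * 1 - T * (B * A ^ N) := by rw [hB, mul_one, mul_one]
      _ = B * (1 - T * (1 - S) ^ N) := by rw [hAS]; ring
      _ = B * (S ^ N * gS) := by rw [hkey]
      _ = PowerSeries.X ^ N
          * ((PowerSeries.C (R := R3) x + PowerSeries.C (R := R3) y12 * PowerSeries.X * U) ^ N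
              * (B * gS)) := by
          rw [show S = PowerSeries.X
            * (PowerSeries.C (R := R3) x + PowerSeries.C (R := R3) y12 * PowerSeries.X * U) by
              rw [hS]; ring]
          rw [mul_pow]
          ring
  have h7 : PowerSeries.coeff (R := R3) (N-1) B = PowerSeries.coeff (R := R3) (N-1) T := by
    have h := congrArg (PowerSeries.coeff (R := R3) (N-1)) h6
    rw [map_sub, coeff_X_pow_mul_of_lt _ (by omega)] at h
    exact sub_eq_zero.mp h
  rw [h7]
  -- Step 2: compute coeff of T
  have hu : ∀ e p : ℕ, PowerSeries.coeff (R := R3) (N-1) (PowerSeries.X ^ e * U ^ p)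
      = MvPolynomial.C (uval N e p) := by
    intro e p
    rw [coeff_X_pow_mul', uval]
    split_ifs with h1 h2 h3
    · -- e ≤ N-1, p = 0, e = N-1
      subst h2
      rw [pow_zero, show N - 1 - e = 0 by omega]
      simp
    · -- e ≤ N-1, p = 0, e ≠ N-1
      subst h2
      rw [pow_zero, PowerSeries.coeff_one, if_neg (by omega)]
      simp
    · -- e ≤ N-1, p ≥ 1
      rw [coeff_U_pow U hU p _ (by omega)]
      rw [← MvPolynomial.C_eq_coe_nat]
    · simp
  have hxm : ∀ k l m : ℕ,
      (x : R3) ^ k * MvPolynomial.X 1 ^ l * MvPolynomial.X 2 ^ m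
        = MvPolynomial.monomial (mon k l m) 1 := by
    intro k l m
    rw [hx, MvPolynomial.X_pow_eq_monomial, MvPolynomial.X_pow_eq_monomial,
      MvPolynomial.X_pow_eq_monomial, MvPolynomial.monomial_mul, MvPolynomial.monomial_mul,
      mon]
    norm_num
  have hSj : ∀ j : ℕ, PowerSeries.coeff (R := R3) (N-1) (S ^ j)
      = ∑ a ∈ Finset.range (j+1),
          (x ^ a * y12 ^ (j-a) * (Nat.choose j a : R3))
            * MvPolynomial.C (uval N (a + 2*(j-a)) (j-a)) := by
    intro j
    rw [hS, add_pow, map_sum]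
    refine Finset.sum_congr rfl fun a ha => ?_
    have hrw : (PowerSeries.C (R := R3) x * PowerSeries.X) ^ a
          * (PowerSeries.C (R := R3) y12 * PowerSeries.X ^ 2 * U) ^ (j-a)
          * ((Nat.choose j a : ℕ) : PowerSeries R3)
        = PowerSeries.C (R := R3) (x ^ a * y12 ^ (j-a) * (Nat.choose j a : R3))
            * (PowerSeries.X ^ (a + 2*(j-a)) * U ^ (j-a)) := by
      rw [show ((Nat.choose j a : ℕ) : PowerSeries R3)
        = PowerSeries.C (R := R3) ((Nat.choose j a : ℕ) : R3) from (map_natCast (PowerSeries.C (R := R3)) _).symm]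
      rw [mul_pow, mul_pow, mul_pow, ← map_pow, ← map_pow, ← pow_mul, map_mul, map_mul,
        pow_add]
      ring
    rw [hrw, PowerSeries.coeff_C_mul, hu]
  have hterm : ∀ j a : ℕ,
      (x ^ a * y12 ^ (j-a) * (Nat.choose j a : R3))
          * MvPolynomial.C (uval N (a + 2*(j-a)) (j-a))
        = ∑ l ∈ Finset.range (j-a+1),
            MvPolynomial.monomial (mon a l (j-a-l))
              ((Nat.choose j a : ℚ) * (Nat.choose (j-a) l : ℚ)
                * uval N (a + 2*(j-a)) (j-a)) := by
    intro j a
    rw [hy, add_pow, Finset.mul_sum, Finset.sum_mul, Finset.sum_mul]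
    refine Finset.sum_congr rfl fun l hl => ?_
    calc x ^ a * (MvPolynomial.X 1 ^ l * MvPolynomial.X 2 ^ (j-a-l)
            * ((Nat.choose (j-a) l : ℕ) : R3)) * (Nat.choose j a : R3)
          * MvPolynomial.C (uval N (a + 2*(j-a)) (j-a))
        = ((Nat.choose j a : R3) * ((Nat.choose (j-a) l : ℕ) : R3)
            * MvPolynomial.C (uval N (a + 2*(j-a)) (j-a)))
          * (x ^ a * MvPolynomial.X 1 ^ l * MvPolynomial.X 2 ^ (j-a-l)) := by ring
      _ = MvPolynomial.monomial (mon a l (j-a-l))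
            ((Nat.choose j a : ℚ) * (Nat.choose (j-a) l : ℚ)
              * uval N (a + 2*(j-a)) (j-a)) := by
          rw [hxm a l (j-a-l), ← MvPolynomial.C_eq_coe_nat, ← MvPolynomial.C_eq_coe_nat,
            ← map_mul, ← map_mul, MvPolynomial.C_mul_monomial, mul_one]
  have hTc : PowerSeries.coeff (R := R3) (N-1) T
      = ∑ j ∈ Finset.range N, ∑ a ∈ Finset.range (j+1), ∑ l ∈ Finset.range (j-a+1),
          MvPolynomial.monomial (mon a l (j-a-l))
            ((Nat.choose (N-1+j) j : ℚ) * ((Nat.choose j a : ℚ) * (Nat.choose (j-a) l : ℚ)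
                * uval N (a + 2*(j-a)) (j-a))) := by
    rw [hT, map_sum]
    refine Finset.sum_congr rfl fun j hj => ?_
    rw [LinearMap.map_smul_of_tower, hSj j]
    rw [Finset.smul_sum]
    refine Finset.sum_congr rfl fun a ha => ?_
    rw [hterm j a, Finset.smul_sum]
    refine Finset.sum_congr rfl fun l hl => ?_
    rw [MvPolynomial.smul_monomial]
    rfl
  rw [hTc]
  -- Step 3: identify terms and reindex
  have hGzero : ∀ k l m : ℕ, N ≤ k + l + m →
      (if k + 2 * (l + m) ≤ N - 1 then
          (MvPolynomial.monomial (mon k l m)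
            ((mult4 (N - 1) k l m : ℚ) *
              (binP ((N : ℤ) - 2 - k - l - m) ((l : ℤ) + m - 1) : ℚ)) : R3)
        else 0) = 0 := by
    intro k l m h
    rw [if_neg (by omega)]
  rw [← reindex N _ hGzero]
  refine Finset.sum_congr rfl fun j hj => Finset.sum_congr rfl fun a ha =>
    Finset.sum_congr rfl fun l hl => ?_
  rw [Finset.mem_range] at hj ha hl
  -- per-term identification
  obtain ⟨m, hm⟩ : ∃ m, j - a - l = m := ⟨_, rfl⟩
  rw [hm]
  have hp : j - a = l + m := by omega
  rw [hp]
  have hjeq : j = a + l + m := by omega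
  rw [hjeq]
  have hite : (if a + 2*(l+m) ≤ N-1 then
        (MvPolynomial.monomial (mon a l m)
          ((mult4 (N - 1) a l m : ℚ) *
            (binP ((N : ℤ) - 2 - a - l - m) ((l : ℤ) + m - 1) : ℚ)) : R3)
      else 0)
      = MvPolynomial.monomial (mon a l m)
          (if a + 2*(l+m) ≤ N-1 then
            (mult4 (N - 1) a l m : ℚ) *
              (binP ((N : ℤ) - 2 - a - l - m) ((l : ℤ) + m - 1) : ℚ)
           else 0) := by
    split_ifs with h
    · rfl
    · rw [map_zero]
  rw [hite, ← term_scalar N a l m hN]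
  congr 1
  ring

end
end

section
/- Let P(z) be a formal power series with P(0) = 0 and P'(0) ≠ 0, and suppose Q is its compositional inverse. Then for n ≥ 1, the coefficient of z^n in log(1/(1−P(z))) equals (1/n) times the coefficient of z^{n−1} in (1/(1−z))·(Q(z)/z)^{−n}. -/
noncomputable section

variable {R : Type*} [CommRing R] [Algebra ℚ R]

/- Composition `f ∘ g` of formal power series (meaningful when `g` has zero constant
term, in which case `coeff n (g^j) = 0` for `j > n` and the sum below is the full sum). -/
def pcomp (f g : PowerSeries R) : PowerSeries R :=
  PowerSeries.mk fun n =>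
    ∑ j ∈ Finset.range (n + 1), PowerSeries.coeff j f * PowerSeries.coeff n (g ^ j)

open PowerSeries Finset

lemma li_coeff_derivativeFun (f : PowerSeries R) (n : ℕ) :
    coeff n (derivativeFun f) = coeff (n + 1) f * (n + 1) :=
  coeff_derivative f n

/-- Cancellation of `m • ·` in a `ℚ`-algebra. -/
lemma li_nsmul_cancel {m : ℕ} (hm : m ≠ 0) {x y : R} (h : m • x = m • y) : x = y := by
  have h2 : ((m : ℚ)) • x = ((m : ℚ)) • y := by
    rw [Nat.cast_smul_eq_nsmul, Nat.cast_smul_eq_nsmul]; exact h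
  have hm' : (m : ℚ) ≠ 0 := by exact_mod_cast hm
  calc x = ((m : ℚ)⁻¹ * (m : ℚ)) • x := by rw [inv_mul_cancel₀ hm', one_smul]
    _ = (m : ℚ)⁻¹ • (((m : ℚ)) • x) := by rw [mul_smul]
    _ = (m : ℚ)⁻¹ • (((m : ℚ)) • y) := by rw [h2]
    _ = ((m : ℚ)⁻¹ * (m : ℚ)) • y := by rw [mul_smul]
    _ = y := by rw [inv_mul_cancel₀ hm', one_smul]

lemma li_coeff_pow_eq_zero {P : PowerSeries R} (hP0 : constantCoeff P = 0)
    {i j : ℕ} (h : i < j) : coeff i (P ^ j) = 0 :=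
  X_pow_dvd_iff.mp (pow_dvd_pow_of_dvd (X_dvd_iff.mpr hP0) j) i h

lemma li_coeff_pcomp (f g : PowerSeries R) (k : ℕ) :
    coeff k (pcomp f g) = ∑ j ∈ range (k + 1), coeff j f * coeff k (g ^ j) := by
  rw [pcomp, coeff_mk]

lemma li_pcomp_one (P : PowerSeries R) : pcomp 1 P = 1 := by
  ext n
  rw [li_coeff_pcomp]
  rw [Finset.sum_eq_single 0]
  · simp
  · intro j _ hj
    simp [coeff_one, hj]
  · simp

lemma li_pcomp_X {P : PowerSeries R} (hP0 : constantCoeff P = 0) : pcomp X P = P := by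
  ext n
  rw [li_coeff_pcomp]
  rcases n with _ | n
  · rw [Finset.sum_range_one]
    simp only [pow_zero, coeff_zero_eq_constantCoeff_apply, constantCoeff_X, map_one,
      zero_mul, hP0]
  · rw [Finset.sum_eq_single 1]
    · simp [coeff_X]
    · intro j _ hj
      simp [coeff_X, hj]
    · intro h
      exact absurd (Finset.mem_range.mpr (by omega)) h

lemma li_pcomp_sub (f g P : PowerSeries R) : pcomp (f - g) P = pcomp f P - pcomp g P := by
  ext n
  simp [li_coeff_pcomp, sub_mul, Finset.sum_sub_distrib]

lemma li_triangle {M : Type*} [AddCommMonoid M] (n : ℕ) (F : ℕ × ℕ → M) :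
    ∑ j ∈ range (n + 1), ∑ q ∈ Finset.HasAntidiagonal.antidiagonal j, F q
      = ∑ p ∈ (range (n + 1) ×ˢ range (n + 1)).filter (fun p => p.1 + p.2 ≤ n), F p := by
  rw [Finset.sum_sigma']
  refine Finset.sum_nbij' (fun x => x.2) (fun p => ⟨p.1 + p.2, p⟩) ?_ ?_ ?_ ?_ ?_
  · rintro ⟨j, a, b⟩ hx
    simp only [Finset.mem_sigma, Finset.mem_range, Finset.HasAntidiagonal.mem_antidiagonal] at hx
    simp only [Finset.mem_filter, Finset.mem_product, Finset.mem_range]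
    omega
  · rintro ⟨a, b⟩ hp
    simp only [Finset.mem_filter, Finset.mem_product, Finset.mem_range] at hp
    exact Finset.mem_sigma.mpr ⟨Finset.mem_range.mpr (show a + b < n + 1 by omega),
      Finset.HasAntidiagonal.mem_antidiagonal.mpr rfl⟩
  · rintro ⟨j, a, b⟩ hx
    simp only [Finset.mem_sigma, Finset.mem_range, Finset.HasAntidiagonal.mem_antidiagonal] at hx
    simp only [hx.2]
  · rintro ⟨a, b⟩ _; rfl
  · rintro ⟨j, a, b⟩ _; rfl

lemma li_pcomp_mul (f g P : PowerSeries R) (hP0 : constantCoeff P = 0) :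
    pcomp (f * g) P = pcomp f P * pcomp g P := by
  ext n
  have hA : ∀ (h : PowerSeries R) (i : ℕ), i ≤ n →
      coeff i (pcomp h P) = ∑ a ∈ range (n + 1), coeff a h * coeff i (P ^ a) := by
    intro h i hi
    rw [li_coeff_pcomp]
    apply Finset.sum_subset
    · exact Finset.range_subset_range.mpr (by omega)
    · intro a _ ha
      rw [li_coeff_pow_eq_zero hP0 (by simp [Finset.mem_range] at ha; omega), mul_zero]
  have rhs : coeff n (pcomp f P * pcomp g P)
      = ∑ a ∈ range (n + 1), ∑ b ∈ range (n + 1),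
          coeff a f * coeff b g * coeff n (P ^ (a + b)) := by
    rw [coeff_mul]
    calc ∑ p ∈ Finset.HasAntidiagonal.antidiagonal n, coeff p.1 (pcomp f P) * coeff p.2 (pcomp g P)
        = ∑ p ∈ Finset.HasAntidiagonal.antidiagonal n, ∑ a ∈ range (n + 1), ∑ b ∈ range (n + 1),
            coeff a f * coeff b g * (coeff p.1 (P ^ a) * coeff p.2 (P ^ b)) := by
          refine Finset.sum_congr rfl fun p hp => ?_
          rw [Finset.HasAntidiagonal.mem_antidiagonal] at hp
          rw [hA f p.1 (by omega), hA g p.2 (by omega), Finset.sum_mul_sum]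
          refine Finset.sum_congr rfl fun a _ => Finset.sum_congr rfl fun b _ => ?_
          ring
      _ = ∑ a ∈ range (n + 1), ∑ b ∈ range (n + 1),
            coeff a f * coeff b g *
              (∑ p ∈ Finset.HasAntidiagonal.antidiagonal n, coeff p.1 (P ^ a) * coeff p.2 (P ^ b)) := by
          rw [Finset.sum_comm]
          refine Finset.sum_congr rfl fun a _ => ?_
          rw [Finset.sum_comm]
          refine Finset.sum_congr rfl fun b _ => ?_
          rw [Finset.mul_sum]
      _ = ∑ a ∈ range (n + 1), ∑ b ∈ range (n + 1),
            coeff a f * coeff b g * coeff n (P ^ (a + b)) := by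
          refine Finset.sum_congr rfl fun a _ => Finset.sum_congr rfl fun b _ => ?_
          rw [pow_add, coeff_mul]
  rw [rhs, li_coeff_pcomp]
  have lhs : ∑ j ∈ range (n + 1), coeff j (f * g) * coeff n (P ^ j)
      = ∑ j ∈ range (n + 1), ∑ q ∈ Finset.HasAntidiagonal.antidiagonal j,
          (fun q : ℕ × ℕ => coeff q.1 f * coeff q.2 g * coeff n (P ^ (q.1 + q.2))) q := by
    refine Finset.sum_congr rfl fun j hj => ?_
    rw [coeff_mul, Finset.sum_mul]
    refine Finset.sum_congr rfl fun q hq => ?_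
    rw [Finset.HasAntidiagonal.mem_antidiagonal] at hq
    simp only [← hq]
  rw [lhs, li_triangle]
  rw [← Finset.sum_product']
  apply Finset.sum_subset
  · exact Finset.filter_subset _ _
  · intro p hp hnp
    have hlt : n < p.1 + p.2 := by
      by_contra hle
      exact hnp (Finset.mem_filter.mpr ⟨hp, by omega⟩)
    rw [li_coeff_pow_eq_zero hP0 hlt, mul_zero]

lemma li_pcomp_pow (f P : PowerSeries R) (hP0 : constantCoeff P = 0) (k : ℕ) :
    pcomp (f ^ k) P = (pcomp f P) ^ k := by
  induction k with
  | zero => simp [li_pcomp_one]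
  | succ k ih => rw [pow_succ, pow_succ, li_pcomp_mul _ _ _ hP0, ih]

lemma li_D_X : derivativeFun (X : PowerSeries R) = 1 := by
  ext n
  rw [li_coeff_derivativeFun, coeff_X, coeff_one]
  rcases n with _ | n <;> simp

lemma li_D_pow (T : PowerSeries R) (k : ℕ) :
    derivativeFun (T ^ (k + 1)) = (k + 1 : ℕ) • (T ^ k * derivativeFun T) := by
  induction k with
  | zero => simp
  | succ k ih =>
    rw [pow_succ, derivativeFun_mul, ih]
    simp only [smul_eq_mul, nsmul_eq_mul]
    push_cast
    ring

lemma li_DP {P T : PowerSeries R} (hXT : X * T = P) :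
    derivativeFun P = T + X * derivativeFun T := by
  rw [← hXT, derivativeFun_mul, li_D_X]
  simp only [smul_eq_mul]
  ring

/-- Monomial case `j = m-1` of the key residue lemma. -/
lemma li_mono_a {P T B : PowerSeries R} (hXT : X * T = P) (k : ℕ)
    (hB : B * T ^ (k + 1) = 1) :
    coeff k (P ^ k * (derivativeFun P * B)) = 1 := by
  apply li_nsmul_cancel (Nat.succ_ne_zero k) (m := k + 1)
  have hid : (k + 1 : ℕ) • (P ^ k * (derivativeFun P * B))
      = X ^ (k + 1) * (derivativeFun (T ^ (k + 1)) * B) + (k + 1 : ℕ) • (X ^ k : PowerSeries R) := by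
    rw [li_DP hXT, ← hXT, li_D_pow]
    simp only [nsmul_eq_mul, mul_pow]
    push_cast
    linear_combination ((k : PowerSeries R) + 1) * X ^ k * hB
  have := congrArg (coeff k) hid
  rw [map_nsmul, map_add, map_nsmul] at this
  rw [this, coeff_X_pow_mul', if_neg (by omega), coeff_X_pow, if_pos rfl, zero_add]

/-- Monomial case `j < m-1` of the key residue lemma. -/
lemma li_mono_b {P T B : PowerSeries R} (hXT : X * T = P) (r j : ℕ)
    (hB : B * T ^ (r + 1 + j + 1) = 1) :
    coeff (r + 1 + j) (P ^ j * (derivativeFun P * B)) = 0 := by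
  set C : PowerSeries R := B * T ^ (j + 1) with hC
  -- differentiate B * T^m = 1
  have hDB : B * ((r + 1 + j + 1 : ℕ) • (T ^ (r + 1 + j) * derivativeFun T))
      + T ^ (r + 1 + j + 1) * derivativeFun B = 0 := by
    have h1 : derivativeFun (B * T ^ (r + 1 + j + 1)) = 0 := by rw [hB, derivativeFun_one]
    rw [derivativeFun_mul, li_D_pow] at h1
    simpa only [smul_eq_mul] using h1
  have hid : (r + 1 : ℕ) • (P ^ j * (derivativeFun P * B)) + X ^ (j + 1) * derivativeFun C
      = (r + 1 : ℕ) • (X ^ j * C) := by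
    -- cancel the unit T^(r+1+j+1)
    have hu : IsUnit (T ^ (r + 1 + j + 1)) :=
      IsUnit.of_mul_eq_one B (by rw [mul_comm]; exact hB)
    apply hu.mul_left_cancel
    rw [hC, derivativeFun_mul, li_D_pow, li_DP hXT, ← hXT]
    simp only [smul_eq_mul, nsmul_eq_mul, mul_pow]
    push_cast
    push_cast at hDB
    linear_combination (X ^ (j + 1) * T ^ (j + 1)) * hDB
  have hc := congrArg (coeff (r + 1 + j)) hid
  rw [map_add, map_nsmul, map_nsmul, coeff_X_pow_mul', if_pos (by omega),
    show r + 1 + j - (j + 1) = r by omega, li_coeff_derivativeFun,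
    coeff_X_pow_mul', if_pos (by omega), show r + 1 + j - j = r + 1 by omega] at hc
  apply li_nsmul_cancel (Nat.succ_ne_zero r) (m := r + 1)
  rw [smul_zero]
  simp only [nsmul_eq_mul] at hc ⊢
  push_cast at hc ⊢
  linear_combination hc

/-- Key residue-style lemma: for `P = X·T` with `B·T^(m'+1) = 1`,
`coeff m' ((h ∘ P) · P' · B) = coeff m' h`. -/
lemma li_key {P T B : PowerSeries R} (hP0 : constantCoeff P = 0)
    (hXT : X * T = P) (m' : ℕ) (hB : B * T ^ (m' + 1) = 1) (h : PowerSeries R) :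
    coeff m' (pcomp h P * (derivativeFun P * B)) = coeff m' h := by
  rw [coeff_mul]
  have step1 : ∀ p ∈ Finset.HasAntidiagonal.antidiagonal m',
      coeff p.1 (pcomp h P) = ∑ j ∈ range (m' + 1), coeff j h * coeff p.1 (P ^ j) := by
    intro p hp
    rw [Finset.HasAntidiagonal.mem_antidiagonal] at hp
    rw [li_coeff_pcomp]
    apply Finset.sum_subset
    · exact Finset.range_subset_range.mpr (by omega)
    · intro a _ ha
      rw [li_coeff_pow_eq_zero hP0 (by simp only [Finset.mem_range] at ha; omega), mul_zero]
  calc ∑ p ∈ Finset.HasAntidiagonal.antidiagonal m', coeff p.1 (pcomp h P) * coeff p.2 (derivativeFun P * B)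
      = ∑ p ∈ Finset.HasAntidiagonal.antidiagonal m', ∑ j ∈ range (m' + 1),
          coeff j h * (coeff p.1 (P ^ j) * coeff p.2 (derivativeFun P * B)) := by
        refine Finset.sum_congr rfl fun p hp => ?_
        rw [step1 p hp, Finset.sum_mul]
        exact Finset.sum_congr rfl fun j _ => by ring
    _ = ∑ j ∈ range (m' + 1), coeff j h * coeff m' (P ^ j * (derivativeFun P * B)) := by
        rw [Finset.sum_comm]
        refine Finset.sum_congr rfl fun j _ => ?_
        rw [coeff_mul, Finset.mul_sum]
    _ = coeff m' h := by
        rw [Finset.sum_eq_single m']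
        · rw [li_mono_a hXT m' hB, mul_one]
        · intro j hj hne
          have hjlt : j < m' := by simp only [Finset.mem_range] at hj; omega
          obtain ⟨r, hr⟩ : ∃ r, m' = r + 1 + j := ⟨m' - j - 1, by omega⟩
          subst hr
          rw [li_mono_b hXT r j hB, mul_zero]
        · intro hm
          exact absurd (Finset.mem_range.mpr (by omega)) hm

/-- Lagrange inversion with `H(z) = log(1/(1−z))`.
Let `P` be a power series over a commutative `ℚ`-algebra with `P(0) = 0` and `P'(0)`
invertible, and let `Q` be its compositional inverse (`Q(0) = 0`, `Q ∘ P = X`).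
Write `Q = z·S`, let `V = S^{−n} = (Q/z)^{−n}`, let `W = (1−z)⁻¹`, and let
`L = log(1/(1−P))` (characterised by `L(0) = 0` and `(1−P)·L' = P'`).  Then for `n ≥ 1`
the coefficient of `z^n` in `L` equals `(1/n)` times the coefficient of `z^{n−1}` in
`W·V = (1/(1−z))·(Q(z)/z)^{−n}`. -/
theorem lagrange_inversion_log
    (P Q : PowerSeries R)
    (hP0 : PowerSeries.constantCoeff P = 0)
    (hP1 : IsUnit (PowerSeries.coeff 1 P))
    (hQ0 : PowerSeries.constantCoeff Q = 0)
    (hQP : pcomp Q P = PowerSeries.X)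
    (n : ℕ) (hn : 1 ≤ n)
    (S : PowerSeries R) (hS : PowerSeries.X * S = Q)
    (V : PowerSeries R) (hV : V * S ^ n = 1)
    (W : PowerSeries R) (hW : W * (1 - PowerSeries.X) = 1)
    (L : PowerSeries R)
    (hL0 : PowerSeries.constantCoeff L = 0)
    (hL : (1 - P) * PowerSeries.derivativeFun L = PowerSeries.derivativeFun P) :
    PowerSeries.coeff n L =
      (1 / (n : ℚ)) • PowerSeries.coeff (n - 1) (W * V) := by
  obtain ⟨m', rfl⟩ : ∃ m', n = m' + 1 := ⟨n - 1, by omega⟩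
  set T : PowerSeries R := mk fun i => coeff (i + 1) P with hT
  have hXT : X * T = P := by
    ext k
    rcases k with _ | k
    · rw [coeff_zero_eq_constantCoeff_apply, coeff_zero_eq_constantCoeff_apply, hP0, map_mul,
        constantCoeff_X, zero_mul]
    · rw [coeff_succ_X_mul, hT, coeff_mk]
  have hTu : IsUnit T := by
    rw [isUnit_iff_constantCoeff]
    simpa [hT, constantCoeff_mk] using hP1
  obtain ⟨B, hB⟩ : ∃ B, B * T ^ (m' + 1) = 1 := by
    obtain ⟨u, hu⟩ := hTu.pow (m' + 1)
    exact ⟨↑u⁻¹, by rw [← hu]; exact u.inv_mul⟩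
  have hSP : P * pcomp S P = X := by
    rw [← hQP, ← hS, li_pcomp_mul _ _ _ hP0, li_pcomp_X hP0]
  have hVP : pcomp V P * (pcomp S P) ^ (m' + 1) = 1 := by
    rw [← li_pcomp_pow _ _ hP0, ← li_pcomp_mul _ _ _ hP0, hV, li_pcomp_one]
  have hVT : pcomp V P = T ^ (m' + 1) := by
    have h1 : X ^ (m' + 1) * pcomp V P = X ^ (m' + 1) * T ^ (m' + 1) := by
      calc X ^ (m' + 1) * pcomp V P = P ^ (m' + 1) * ((pcomp S P) ^ (m' + 1) * pcomp V P) := by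
            rw [← hSP, mul_pow]; ring
        _ = P ^ (m' + 1) := by rw [mul_comm ((pcomp S P) ^ (m' + 1)), hVP, mul_one]
        _ = X ^ (m' + 1) * T ^ (m' + 1) := by rw [← mul_pow, hXT]
    ext k
    have h2 := congrArg (coeff (k + (m' + 1))) h1
    rwa [coeff_X_pow_mul, coeff_X_pow_mul] at h2
  have hWP : pcomp W P * (1 - P) = 1 := by
    have h3 : pcomp (1 - X) P = 1 - P := by
      rw [li_pcomp_sub, li_pcomp_one, li_pcomp_X hP0]
    rw [← h3, ← li_pcomp_mul _ _ _ hP0, hW, li_pcomp_one]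
  have hU1P : IsUnit (1 - P) := IsUnit.of_mul_eq_one _ (by rw [mul_comm]; exact hWP)
  have hLD : derivativeFun L = pcomp W P * derivativeFun P := by
    apply hU1P.mul_left_cancel
    rw [hL, ← mul_assoc, mul_comm (1 - P) (pcomp W P), hWP, one_mul]
  have hkey := li_key hP0 hXT m' hB (W * V)
  have hcomp : pcomp (W * V) P * (derivativeFun P * B) = derivativeFun L := by
    rw [li_pcomp_mul _ _ _ hP0, hVT, hLD]
    linear_combination (pcomp W P * derivativeFun P) * hB
  have hfin : coeff m' (W * V) = coeff (m' + 1) L * ((m' : R) + 1) := by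
    rw [← hkey, hcomp, li_coeff_derivativeFun]
  rw [show m' + 1 - 1 = m' from rfl, hfin]
  have hk : ((m' + 1 : ℕ) : ℚ) ≠ 0 := by exact_mod_cast Nat.succ_ne_zero m'
  have halg : coeff (m' + 1) L * ((m' : R) + 1)
      = ((m' + 1 : ℕ) : ℚ) • coeff (m' + 1) L := by
    rw [Algebra.smul_def]
    have : (algebraMap ℚ R) ((m' + 1 : ℕ) : ℚ) = ((m' : R) + 1) := by
      rw [map_natCast]; push_cast; ring
    rw [this, mul_comm]
  rw [halg, smul_smul]
  rw [show ((m' + 1 : ℕ) : ℚ) = ((m' : ℚ) + 1) by push_cast; ring] at hk ⊢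
  rw [one_div, inv_mul_cancel₀ hk, one_smul]

end
end

section
/- q-Lucas theorem: let d ≥ 2, let ω be a primitive d-th root of unity in ℂ, and let a, b be non-negative integers. Then the q-binomial coefficient evaluated at ω satisfies qbinom(a,b)(ω) = binomial(⌊a/d⌋, ⌊b/d⌋) · qbinom(a mod d, b mod d)(ω). In particular, if d divides b then qbinom(a,b)(ω) = binomial(⌊a/d⌋, ⌊b/d⌋). -/
/- The q-integer [n]_q = 1 + q + ... + q^{n-1}, as a polynomial in q over ℤ. -/
noncomputable def qint (n : ℕ) : Polynomial ℤ := ∑ i ∈ Finset.range n, Polynomial.X ^ i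

/- The q-factorial [n]_q! = [1]_q [2]_q ⋯ [n]_q. -/
noncomputable def qfact (n : ℕ) : Polynomial ℤ := ∏ i ∈ Finset.range n, qint (i + 1)

/- The Gaussian (q-)binomial coefficient, defined via the q-Pascal recurrence
`[a+1, b+1]_q = [a, b]_q + q^{b+1}·[a, b+1]_q`; it equals
`[a]_q!/([b]_q!·[a−b]_q!)` for `b ≤ a` and is `0` for `b > a`. -/
noncomputable def qbinom : ℕ → ℕ → Polynomial ℤ
  | _, 0 => 1
  | 0, _ + 1 => 0
  | a + 1, b + 1 => qbinom a b + Polynomial.X ^ (b + 1) * qbinom a (b + 1)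

lemma qb_zero (a : ℕ) : qbinom a 0 = 1 := by cases a <;> rfl

lemma qb_zero' (b : ℕ) : qbinom 0 (b+1) = 0 := rfl

lemma qb_succ (a b : ℕ) : qbinom (a+1) (b+1) = qbinom a b + Polynomial.X ^ (b+1) * qbinom a (b+1) := rfl

lemma qb_gt : ∀ a b : ℕ, a < b → qbinom a b = 0 := by
  intro a
  induction a with
  | zero => intro b hb; obtain ⟨c, rfl⟩ : ∃ c, b = c + 1 := ⟨b - 1, by omega⟩; rfl
  | succ n ih =>
    intro b hb
    obtain ⟨c, rfl⟩ : ∃ c, b = c + 1 := ⟨b - 1, by omega⟩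
    rw [qb_succ, ih c (by omega), ih (c+1) (by omega)]
    simp

lemma succ_choose_two (n : ℕ) : (n+1).choose 2 = n.choose 2 + n := by
  have := Nat.choose_succ_succ n 1
  simp [Nat.choose_one_right] at this; omega

lemma choose_two_add (x y : ℕ) : (x + y).choose 2 = x.choose 2 + x * y + y.choose 2 := by
  induction y with
  | zero => simp
  | succ n ih =>
    have h1 := succ_choose_two (x + n)
    have h2 := succ_choose_two n
    have : x + (n+1) = (x + n) + 1 := by omega
    rw [this, h1, h2, ih]; ring
section
variable (ω : ℂ)

open Polynomial Finset

lemma coeff_G : ∀ (a s b : ℕ),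
    (∏ k ∈ Finset.range a, (Polynomial.C (ω^(k+s)) * Polynomial.X + 1)).coeff b
      = ω^(s*b + b.choose 2) * Polynomial.aeval ω (qbinom a b) := by
  intro a
  induction a with
  | zero =>
    intro s b
    cases b with
    | zero => simp [qb_zero]
    | succ c => simp [qb_zero', Polynomial.coeff_one]
  | succ n ih =>
    intro s b
    rw [Finset.prod_range_succ']
    have hsh : ∀ k : ℕ, k + 1 + s = k + (s+1) := by omega
    simp only [hsh]
    set P := ∏ k ∈ Finset.range n, (Polynomial.C (ω^(k+(s+1))) * Polynomial.X + 1) with hP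
    cases b with
    | zero =>
      rw [Polynomial.mul_coeff_zero]
      have h1 : P.coeff 0 = 1 := by
        rw [hP, ih (s+1) 0]; simp [qb_zero]
      simp [h1, qb_zero]
    | succ c =>
      have expand : (P * (Polynomial.C (ω^(0+s)) * Polynomial.X + 1)).coeff (c+1)
          = ω^s * P.coeff c + P.coeff (c+1) := by
        rw [mul_add, mul_one, Polynomial.coeff_add]
        have : P * (Polynomial.C (ω^(0+s)) * Polynomial.X) = Polynomial.C (ω^s) * (P * Polynomial.X) := by
          ring_nf
        rw [this, Polynomial.coeff_C_mul, Polynomial.coeff_mul_X]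
      rw [expand, ih (s+1) c, ih (s+1) (c+1), qb_succ, map_add, map_mul, map_pow,
        Polynomial.aeval_X, succ_choose_two]
      ring
end
section
open Polynomial Finset
variable {d : ℕ} {ω : ℂ}

lemma prod_sub_roots (hd : 2 ≤ d) (hω : IsPrimitiveRoot ω d) (w : ℂ) :
    ∏ k ∈ Finset.range d, (w - ω^k) = w^d - 1 := by
  have hmonic : (Polynomial.X^d - Polynomial.C 1 : Polynomial ℂ).Monic :=
    Polynomial.monic_X_pow_sub_C 1 (by omega)
  have hsplits : Polynomial.Splits (Polynomial.X^d - Polynomial.C 1 : Polynomial ℂ) :=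
    IsAlgClosed.splits _
  have hfact := hsplits.eq_prod_roots_of_monic hmonic
  have hroots : (Polynomial.X^d - Polynomial.C 1 : Polynomial ℂ).roots
      = (Multiset.range d).map (fun k => ω ^ k * 1) := by
    have := hω.nthRoots_eq (α := 1) (a := (1:ℂ)) (by simp)
    rw [← this]
    rfl
  rw [hroots] at hfact
  have : (Polynomial.X^d - Polynomial.C 1 : Polynomial ℂ)
      = ∏ k ∈ Finset.range d, (Polynomial.X - Polynomial.C (ω^k)) := by
    rw [hfact, Multiset.map_map]
    rw [Finset.prod, Finset.range_val]
    simp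
  have h2 := congrArg (Polynomial.eval w) this
  simp only [Polynomial.eval_prod, Polynomial.eval_sub, Polynomial.eval_pow,
    Polynomial.eval_X, Polynomial.eval_C, Polynomial.eval_one] at h2
  exact h2.symm

lemma Q_eq (hd : 2 ≤ d) (hω : IsPrimitiveRoot ω d) :
    (∏ k ∈ Finset.range d, (Polynomial.C (ω^k) * Polynomial.X + 1) : Polynomial ℂ)
      = 1 + Polynomial.C ((-1:ℂ)^(d+1)) * Polynomial.X^d := by
  apply Polynomial.funext
  intro z
  simp only [Polynomial.eval_prod, Polynomial.eval_add, Polynomial.eval_mul,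
    Polynomial.eval_C, Polynomial.eval_X, Polynomial.eval_one, Polynomial.eval_pow]
  by_cases hz : z = 0
  · subst hz
    simp [zero_pow (by omega : d ≠ 0)]
  · have key : ∀ k, ω^k * z + 1 = (-z) * ((-z⁻¹) - ω^k) := by
      intro k
      field_simp
      ring
    calc ∏ k ∈ Finset.range d, (ω^k * z + 1)
        = ∏ k ∈ Finset.range d, ((-z) * ((-z⁻¹) - ω^k)) := by
          exact Finset.prod_congr rfl (fun k _ => key k)
      _ = (-z)^d * ∏ k ∈ Finset.range d, ((-z⁻¹) - ω^k) := by
          rw [Finset.prod_mul_distrib, Finset.prod_const, Finset.card_range]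
      _ = (-z)^d * ((-z⁻¹)^d - 1) := by rw [prod_sub_roots hd hω]
      _ = 1 + (-1:ℂ)^(d+1) * z^d := by
          have : ((-z) * (-z⁻¹))^d = 1 := by
            rw [neg_mul_neg, mul_inv_cancel₀ hz, one_pow]
          rw [mul_sub, ← mul_pow, this, mul_one, neg_pow z d, pow_succ]
          ring
end
section
open Polynomial Finset
variable {d : ℕ} {ω : ℂ}

lemma sign1 (hd : 2 ≤ d) (hω : IsPrimitiveRoot ω d) :
    ω ^ (d.choose 2) = (-1:ℂ)^(d+1) := by
  rcases Nat.even_or_odd d with he | ho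
  · obtain ⟨e, rfl⟩ := he
    have he1 : 1 ≤ e := by omega
    have hch : (e + e).choose 2 = e * (e + e - 1) := by
      rw [Nat.choose_two_right]
      have h : (e+e)*(e+e-1) = 2*(e*(e+e-1)) := by ring
      rw [h]; omega
    have hωe : ω ^ e = -1 := by
      have h2 : (ω ^ e) ^ 2 = 1 := by
        rw [← pow_mul]
        have : e * 2 = e + e := by omega
        rw [this, hω.pow_eq_one]
      have hne : ω ^ e ≠ 1 := hω.pow_ne_one_of_pos_of_lt (by omega) (by omega)
      have h3 : (ω ^ e - 1) * (ω ^ e + 1) = 0 := by linear_combination h2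
      rcases mul_eq_zero.mp h3 with h | h
      · exact (hne (sub_eq_zero.mp h)).elim
      · exact eq_neg_of_add_eq_zero_left h
    rw [hch, pow_mul, hωe]
    have hodd : Odd (e + e - 1) := by refine ⟨e - 1, by omega⟩
    rw [hodd.neg_one_pow]
    have : Odd (e + e + 1) := ⟨e, by omega⟩
    rw [this.neg_one_pow]
  · obtain ⟨e, rfl⟩ := ho
    have hch : (2*e + 1).choose 2 = (2*e+1) * e := by
      rw [Nat.choose_two_right]
      have h0 : 2*e+1-1 = 2*e := by omega
      have h : (2*e+1)*(2*e+1-1) = 2*((2*e+1)*e) := by rw [h0]; ring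
      rw [h]; omega
    rw [hch, pow_mul, hω.pow_eq_one, one_pow]
    have : Even (2*e + 1 + 1) := ⟨e + 1, by omega⟩
    rw [this.neg_one_pow]

lemma sign2 (hd : 2 ≤ d) (hω : IsPrimitiveRoot ω d) :
    ∀ j : ℕ, ω ^ ((j*d).choose 2) = ((-1:ℂ)^(d+1))^j := by
  intro j
  induction j with
  | zero => simp
  | succ n ih =>
    have : (n+1)*d = n*d + d := by ring
    rw [this, choose_two_add, pow_add, pow_add, ih]
    have h1 : ω ^ (n*d*d) = 1 := by
      have : n*d*d = d*(n*d) := by ring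
      rw [this, pow_mul, hω.pow_eq_one, one_pow]
    rw [h1, sign1 hd hω, pow_succ]
    ring

lemma sign3 (hd : 2 ≤ d) (hω : IsPrimitiveRoot ω d) (j m : ℕ) :
    ω ^ ((j*d + m).choose 2) = ((-1:ℂ)^(d+1))^j * ω^(m.choose 2) := by
  rw [choose_two_add, pow_add, pow_add, sign2 hd hω]
  have h1 : ω ^ (j*d*m) = 1 := by
    have : j*d*m = d*(j*m) := by ring
    rw [this, pow_mul, hω.pow_eq_one, one_pow]
  rw [h1]
  ring
end
section
open Polynomial Finset
variable {d : ℕ} {ω : ℂ}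

lemma coeff_G0 (a b : ℕ) :
    (∏ k ∈ Finset.range a, (Polynomial.C (ω^k) * Polynomial.X + 1)).coeff b
      = ω^(b.choose 2) * Polynomial.aeval ω (qbinom a b) := by
  have := coeff_G ω a 0 b
  simpa using this

lemma prod_period (hd : 2 ≤ d) (hω : IsPrimitiveRoot ω d) :
    ∀ q : ℕ, (∏ k ∈ Finset.range (d*q), (Polynomial.C (ω^k) * Polynomial.X + 1))
      = (∏ k ∈ Finset.range d, (Polynomial.C (ω^k) * Polynomial.X + 1))^q := by
  intro q
  induction q with
  | zero => simp
  | succ n ih =>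
    have h1 : d*(n+1) = d*n + d := by ring
    rw [h1, Finset.prod_range_add, ih, pow_succ]
    congr 1
    apply Finset.prod_congr rfl
    intro i _
    have : ω ^ (d*n + i) = ω ^ i := by
      rw [pow_add, pow_mul, hω.pow_eq_one, one_pow, one_mul]
    rw [this]

lemma q_lucas_main (hd : 2 ≤ d) (hω : IsPrimitiveRoot ω d) (a b : ℕ) :
    Polynomial.aeval ω (qbinom a b) =
      ((a / d).choose (b / d) : ℂ) * Polynomial.aeval ω (qbinom (a % d) (b % d)) := by
  set q := a / d with hq
  set r := a % d with hr
  set j₀ := b / d with hj₀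
  set m := b % d with hm
  set ε : ℂ := (-1:ℂ)^(d+1) with hε
  have hωne : ω ≠ 0 := hω.ne_zero (by omega)
  have hεne : ε ≠ 0 := by
    simp [hε]
  have hrd : r < d := Nat.mod_lt a (by omega)
  have hmd : m < d := Nat.mod_lt b (by omega)
  have ha : d * q + r = a := Nat.div_add_mod a d
  have hb : d * j₀ + m = b := Nat.div_add_mod b d
  set Q : Polynomial ℂ := ∏ k ∈ Finset.range d, (Polynomial.C (ω^k) * Polynomial.X + 1) with hQdef
  set Gr : Polynomial ℂ := ∏ k ∈ Finset.range r, (Polynomial.C (ω^k) * Polynomial.X + 1) with hGr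
  -- split the product
  have hsplit : (∏ k ∈ Finset.range a, (Polynomial.C (ω^k) * Polynomial.X + 1)) = Q^q * Gr := by
    rw [← ha, Finset.prod_range_add, prod_period hd hω]
    congr 1
    apply Finset.prod_congr rfl
    intro i _
    have : ω ^ (d*q + i) = ω ^ i := by
      rw [pow_add, pow_mul, hω.pow_eq_one, one_pow, one_mul]
    rw [this]
  -- binomial expansion of Q^q
  have hQq : Q^q = ∑ j ∈ Finset.range (q+1),
      Polynomial.C ((q.choose j : ℂ) * ε^j) * Polynomial.X^(d*j) := by
    rw [hQdef, Q_eq hd hω, add_comm, add_pow]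
    apply Finset.sum_congr rfl
    intro j _
    rw [mul_pow, one_pow, mul_one, ← Polynomial.C_pow, ← pow_mul, Polynomial.C_mul]
    have hc : ((q.choose j : ℕ) : Polynomial ℂ) = Polynomial.C ((q.choose j : ℕ) : ℂ) := by
      simp
    rw [hc]
    ring
  -- coefficient extraction
  have hcoeff : ω^(b.choose 2) * Polynomial.aeval ω (qbinom a b)
      = ∑ j ∈ Finset.range (q+1), (q.choose j : ℂ) * ε^j *
          (if d*j ≤ b then ω^((b - d*j).choose 2) * Polynomial.aeval ω (qbinom r (b - d*j)) else 0) := by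
    rw [← coeff_G0 a b, hsplit, hQq, Finset.sum_mul, Polynomial.finset_sum_coeff]
    apply Finset.sum_congr rfl
    intro j _
    have hre : Polynomial.C ((q.choose j : ℂ) * ε^j) * Polynomial.X^(d*j) * Gr
        = Polynomial.C ((q.choose j : ℂ) * ε^j) * (Gr * Polynomial.X^(d*j)) := by ring
    rw [hre, Polynomial.coeff_C_mul, Polynomial.coeff_mul_X_pow']
    by_cases h : d*j ≤ b
    · rw [if_pos h, if_pos h, coeff_G0]
    · rw [if_neg h, if_neg h]
  by_cases hj : j₀ ≤ q
  · -- collapse sum to single term j₀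
    have hsingle : ∑ j ∈ Finset.range (q+1), (q.choose j : ℂ) * ε^j *
          (if d*j ≤ b then ω^((b - d*j).choose 2) * Polynomial.aeval ω (qbinom r (b - d*j)) else 0)
        = (q.choose j₀ : ℂ) * ε^j₀ * (ω^(m.choose 2) * Polynomial.aeval ω (qbinom r m)) := by
      rw [Finset.sum_eq_single j₀]
      · rw [if_pos (by omega : d*j₀ ≤ b)]
        have : b - d*j₀ = m := by omega
        rw [this]
      · intro j hjmem hjne
        simp only [Finset.mem_range] at hjmem
        by_cases h : d*j ≤ b
        · rw [if_pos h]
          have hgt : r < b - d*j := by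
            rcases Nat.lt_or_ge j j₀ with hlt | hge
            · have h1 : d*(j+1) ≤ d*j₀ := Nat.mul_le_mul_left d (by omega)
              rw [Nat.mul_succ] at h1
              omega
            · exfalso
              have h1 : d*(j₀+1) ≤ d*j := Nat.mul_le_mul_left d (by omega)
              rw [Nat.mul_succ] at h1
              omega
          rw [qb_gt r (b - d*j) hgt, map_zero, mul_zero, mul_zero]
        · rw [if_neg h, mul_zero]
      · intro habs
        exfalso; exact habs (Finset.mem_range.mpr (by omega))
    rw [hsingle] at hcoeff
    have hsgn : ω^(b.choose 2) = ε^j₀ * ω^(m.choose 2) := by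
      rw [← hb]
      have : d * j₀ + m = j₀ * d + m := by ring
      rw [this, sign3 hd hω]
    rw [hsgn] at hcoeff
    have hcancel : ε^j₀ * ω^(m.choose 2) ≠ 0 :=
      mul_ne_zero (pow_ne_zero _ hεne) (pow_ne_zero _ hωne)
    have : (ε^j₀ * ω^(m.choose 2)) * Polynomial.aeval ω (qbinom a b)
        = (ε^j₀ * ω^(m.choose 2)) * ((q.choose j₀ : ℂ) * Polynomial.aeval ω (qbinom r m)) := by
      rw [mul_assoc] at hcoeff ⊢
      rw [hcoeff]; ring
    exact mul_left_cancel₀ hcancel this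
  · -- j₀ > q : both sides vanish
    have hzero : ∑ j ∈ Finset.range (q+1), (q.choose j : ℂ) * ε^j *
          (if d*j ≤ b then ω^((b - d*j).choose 2) * Polynomial.aeval ω (qbinom r (b - d*j)) else 0) = 0 := by
      apply Finset.sum_eq_zero
      intro j hjmem
      simp only [Finset.mem_range] at hjmem
      by_cases h : d*j ≤ b
      · rw [if_pos h]
        have hgt : r < b - d*j := by
          have h1 : d*j ≤ d*q := Nat.mul_le_mul_left d (by omega)
          have h2 : d*(q+1) ≤ d*j₀ := Nat.mul_le_mul_left d (by omega)
          rw [Nat.mul_succ] at h2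
          omega
        rw [qb_gt r (b - d*j) hgt, map_zero, mul_zero, mul_zero]
      · rw [if_neg h, mul_zero]
    rw [hzero] at hcoeff
    have h1 : Polynomial.aeval ω (qbinom a b) = 0 := by
      have := mul_eq_zero.mp hcoeff
      rcases this with h | h
      · exact absurd h (pow_ne_zero _ hωne)
      · exact h
    rw [h1, Nat.choose_eq_zero_of_lt (by omega : q < j₀)]
    simp
end

/-- q-Lucas theorem. Let `d ≥ 2`, `ω` a primitive `d`-th root of unity
in `ℂ`, and `a, b` non-negative integers.  Then
`qbinom(a,b)(ω) = binomial(⌊a/d⌋, ⌊b/d⌋)·qbinom(a mod d, b mod d)(ω)`; in particular,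
if `d ∣ b` then `qbinom(a,b)(ω) = binomial(⌊a/d⌋, ⌊b/d⌋)`. -/
theorem q_lucas (d : ℕ) (hd : 2 ≤ d) (ω : ℂ) (hω : IsPrimitiveRoot ω d) (a b : ℕ) :
    Polynomial.aeval ω (qbinom a b) =
      ((a / d).choose (b / d) : ℂ) * Polynomial.aeval ω (qbinom (a % d) (b % d)) ∧
    (d ∣ b → Polynomial.aeval ω (qbinom a b) = ((a / d).choose (b / d) : ℂ)) := by
  refine ⟨q_lucas_main hd hω a b, fun hdvd => ?_⟩
  have hb0 : b % d = 0 := Nat.mod_eq_zero_of_dvd hdvd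
  rw [q_lucas_main hd hω a b, hb0, qb_zero]
  simp
end

section
/- Let d ≥ 2, ω a primitive d-th root of unity, and let n ≡ 0 (mod d), n ≥ d. Let a, b, c be non-negative integers such that exactly one of a, b, c is ≡ 1 (mod d) and the other two are ≡ 0 (mod d). Then (1/[n−1]_ω) · qmultinomial(n−2+a+b+c; n−2,a,b,c)(ω) = multinomial(⌊(n+a+b+c)/d⌋ − 1; n/d − 1, ⌊a/d⌋, ⌊b/d⌋, ⌊c/d⌋). -/
open Polynomial Finset

lemma qbinom_zero (m : ℕ) : qbinom m 0 = 1 := by cases m <;> rfl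
lemma qbinom_zero_succ (k : ℕ) : qbinom 0 (k+1) = 0 := rfl
lemma qbinom_succ_succ (m k : ℕ) :
    qbinom (m+1) (k+1) = qbinom m k + Polynomial.X ^ (k + 1) * qbinom m (k+1) := rfl

lemma qbinom_eq_zero : ∀ m k : ℕ, m < k → qbinom m k = 0 := by
  intro m
  induction m with
  | zero => intro k hk; cases k with
    | zero => omega
    | succ k => rfl
  | succ m ih =>
    intro k hk
    cases k with
    | zero => omega
    | succ k =>
      rw [qbinom_succ_succ, ih k (by omega), ih (k+1) (by omega)]
      ring

lemma qbinom_one : ∀ m : ℕ, qbinom m 1 = qint m := by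
  intro m
  induction m with
  | zero => simp [qint, qbinom_zero_succ]
  | succ m ih =>
    rw [show (1:ℕ) = 0 + 1 from rfl, qbinom_succ_succ, qbinom_zero, ih, qint, qint,
      geom_sum_succ]
    ring

lemma qint_add (x y : ℕ) : qint (x + y) = qint x + Polynomial.X ^ x * qint y := by
  simp only [qint, Finset.sum_range_add, pow_add, Finset.mul_sum]

lemma qfact_zero : qfact 0 = 1 := by simp [qfact]

lemma qfact_succ (m : ℕ) : qfact (m+1) = qfact m * qint (m+1) := by
  simp [qfact, Finset.prod_range_succ]

lemma qbinom_mul_qfact : ∀ n x y : ℕ, x + y = n →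
    qbinom n x * (qfact x * qfact y) = qfact n := by
  intro n
  induction n with
  | zero => intro x y h
            obtain ⟨rfl, rfl⟩ : x = 0 ∧ y = 0 := by omega
            simp [qbinom_zero, qfact_zero]
  | succ n ih =>
    intro x y h
    cases x with
    | zero =>
      obtain rfl : y = n + 1 := by omega
      simp [qbinom_zero, qfact_zero]
    | succ k =>
      cases y with
      | zero =>
        obtain rfl : k = n := by omega
        have h1 := ih k 0 (by omega)
        rw [qfact_zero, mul_one] at h1
        rw [qbinom_succ_succ, qbinom_eq_zero k (k+1) (by omega), qfact_zero,
          qfact_succ k]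
        linear_combination qint (k+1) * h1
      | succ j =>
        have hn : k + j + 1 = n := by omega
        have h1 := ih k (j+1) (by omega)
        have h2 := ih (k+1) j (by omega)
        rw [qbinom_succ_succ, qfact_succ k, qfact_succ j, qfact_succ n,
          show n + 1 = (k+1) + (j+1) by omega, qint_add (k+1) (j+1)]
        rw [qfact_succ j] at h1
        rw [qfact_succ k] at h2
        linear_combination qint (k+1) * h1 + Polynomial.X ^ (k+1) * qint (j+1) * h2

lemma gf (ω : ℂ) : ∀ (m : ℕ) (t : ℂ),
    ∏ i ∈ Finset.range m, (1 + Polynomial.C (ω^i * t) * Polynomial.X) =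
    ∑ k ∈ Finset.range (m+1),
      Polynomial.C (ω^(∑ i ∈ Finset.range k, i) * t^k * Polynomial.aeval ω (qbinom m k))
        * Polynomial.X^k := by
  intro m
  induction m with
  | zero => intro t; simp [qbinom_zero]
  | succ m ih =>
    intro t
    have key : ∀ k, Polynomial.aeval ω (qbinom (m+1) (k+1)) =
        Polynomial.aeval ω (qbinom m k) + ω^(k+1) * Polynomial.aeval ω (qbinom m (k+1)) := by
      intro k; rw [qbinom_succ_succ]; simp
    set g : ℕ → Polynomial ℂ := fun k =>
      Polynomial.C (ω^(∑ i ∈ Finset.range k, i) * ω^k * t^k * Polynomial.aeval ω (qbinom m k))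
        * Polynomial.X^k with hg
    have hg0 : g 0 = 1 := by simp [hg, qbinom_zero]
    have hgm : g (m+1) = 0 := by
      simp [hg, qbinom_eq_zero m (m+1) (by omega)]
    -- LHS
    rw [Finset.prod_range_succ']
    have e1 : ∏ i ∈ Finset.range m, (1 + Polynomial.C (ω^(i+1) * t) * Polynomial.X)
        = ∏ i ∈ Finset.range m, (1 + Polynomial.C (ω^i * (ω*t)) * Polynomial.X) := by
      apply Finset.prod_congr rfl
      intro i _
      rw [show ω^(i+1) * t = ω^i * (ω*t) by ring]
    rw [e1, ih (ω*t)]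
    have e2 : ∑ k ∈ Finset.range (m+1),
        Polynomial.C (ω^(∑ i ∈ Finset.range k, i) * (ω*t)^k * Polynomial.aeval ω (qbinom m k))
          * Polynomial.X^k = ∑ k ∈ Finset.range (m+1), g k := by
      apply Finset.sum_congr rfl
      intro k _
      rw [hg, show ω^(∑ i ∈ Finset.range k, i) * (ω*t)^k * Polynomial.aeval ω (qbinom m k)
        = ω^(∑ i ∈ Finset.range k, i) * ω^k * t^k * Polynomial.aeval ω (qbinom m k) by
          rw [mul_pow]; ring]
    rw [e2]
    -- RHS
    conv_rhs => rw [Finset.sum_range_succ']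
    have e3 : ∀ k ∈ Finset.range (m+1),
        Polynomial.C (ω^(∑ i ∈ Finset.range (k+1), i) * t^(k+1)
            * Polynomial.aeval ω (qbinom (m+1) (k+1))) * Polynomial.X^(k+1)
        = Polynomial.C t * Polynomial.X * g k + g (k+1) := by
      intro k _
      rw [key k, hg]
      simp only [Finset.sum_range_succ]
      rw [show ω ^ (∑ i ∈ Finset.range k, i + k) * t ^ (k + 1) *
            (Polynomial.aeval ω (qbinom m k) + ω ^ (k + 1) * Polynomial.aeval ω (qbinom m (k+1)))
          = t * (ω ^ (∑ i ∈ Finset.range k, i) * ω^k * t^k * Polynomial.aeval ω (qbinom m k))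
            + ω ^ (∑ i ∈ Finset.range k, i + k) * ω^(k+1) * t^(k+1)
              * Polynomial.aeval ω (qbinom m (k+1)) by ring]
      rw [Polynomial.C_add, Polynomial.C_mul, add_mul]
      rw [show ω ^ (∑ i ∈ Finset.range k, i + k) = ω ^ (∑ i ∈ Finset.range k, i) * ω^k by
        rw [pow_add]]
      ring
    rw [Finset.sum_congr rfl e3, Finset.sum_add_distrib]
    have e4 : ∑ k ∈ Finset.range (m+1), g (k+1)
        = (∑ k ∈ Finset.range (m+1), g k) - g 0 := by
      have := Finset.sum_range_succ' g (m+1)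
      have h2 := Finset.sum_range_succ g (m+1)
      rw [hgm, add_zero] at h2
      -- ∑_{k<m+2} g k = ∑_{k<m+1} g (k+1) + g 0  and = ∑_{k<m+1} g k
      rw [← h2, this]
      ring
    rw [e4, hg0, ← Finset.mul_sum]
    rw [show (ω:ℂ)^0 * t = t by ring]
    rw [show Polynomial.C ((ω ^ ∑ i ∈ Finset.range 0, i) * t ^ 0
        * Polynomial.aeval ω (qbinom (m+1) 0)) * Polynomial.X ^ 0 = 1 by simp [qbinom_zero]]
    ring

lemma prod_X_add_aux {d : ℕ} {ω : ℂ} (hd : 0 < d) (hω : IsPrimitiveRoot ω d) :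
    ∏ i ∈ Finset.range d, (Polynomial.X + Polynomial.C (ω^i)) =
      Polynomial.X^d - Polynomial.C ((-1:ℂ)^d) := by
  have base := X_pow_sub_C_eq_prod (R := ℂ) hω hd (one_pow d)
  have happ := congrArg (Polynomial.aeval (-Polynomial.X : Polynomial ℂ)) base
  simp only [map_sub, map_pow, Polynomial.aeval_X, Polynomial.aeval_C, map_prod,
    mul_one, Polynomial.aeval_one, map_one] at happ
  simp only [Polynomial.algebraMap_eq, ← Polynomial.C_pow] at happ
  have h2 : ∏ i ∈ Finset.range d, (-Polynomial.X - Polynomial.C (ω^i)) =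
      (-1:Polynomial ℂ)^d * ∏ i ∈ Finset.range d, (Polynomial.X + Polynomial.C (ω^i)) := by
    calc ∏ i ∈ Finset.range d, (-Polynomial.X - Polynomial.C (ω^i))
        = ∏ i ∈ Finset.range d, ((-1) * (Polynomial.X + Polynomial.C (ω^i))) := by
          apply Finset.prod_congr rfl; intro i _; ring
      _ = (∏ _i ∈ Finset.range d, (-1 : Polynomial ℂ))
            * ∏ i ∈ Finset.range d, (Polynomial.X + Polynomial.C (ω^i)) :=
          Finset.prod_mul_distrib
      _ = (-1:Polynomial ℂ)^d * ∏ i ∈ Finset.range d, (Polynomial.X + Polynomial.C (ω^i)) := by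
          rw [Finset.prod_const, Finset.card_range]
  rw [h2] at happ
  apply mul_left_cancel₀ (a := ((-1:Polynomial ℂ))^d) (pow_ne_zero _ (by norm_num))
  rw [← happ, neg_pow, map_pow, map_neg, map_one, mul_sub, ← pow_add,
    Even.neg_one_pow (⟨d, rfl⟩ : Even (d + d))]

lemma prod_one_add {d : ℕ} {ω : ℂ} (hd : 0 < d) (hω : IsPrimitiveRoot ω d) :
    ∏ i ∈ Finset.range d, (1 + Polynomial.C (ω^i) * Polynomial.X) =
      1 + Polynomial.C (ω^(∑ i ∈ Finset.range d, i)) * Polynomial.X^d := by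
  have r1 : ∏ j ∈ Finset.range d, (Polynomial.X + Polynomial.C (ω^(d-j)))
      = ∏ j ∈ Finset.range d, (Polynomial.X + Polynomial.C (ω^(j+1))) := by
    conv_rhs => rw [← Finset.prod_range_reflect (fun j => Polynomial.X + Polynomial.C (ω^(j+1))) d]
    apply Finset.prod_congr rfl
    intro j hj
    rw [Finset.mem_range] at hj
    rw [show d - 1 - j + 1 = d - j from by omega]
  have r2 : ∏ j ∈ Finset.range d, (Polynomial.X + Polynomial.C (ω^(j+1)))
      = ∏ j ∈ Finset.range d, (Polynomial.X + Polynomial.C (ω^j)) := by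
    have h1 := Finset.prod_range_succ' (fun j => Polynomial.X + Polynomial.C (ω^j)) d
    have h2 := Finset.prod_range_succ (fun j => Polynomial.X + Polynomial.C (ω^j)) d
    simp only [hω.pow_eq_one, pow_zero] at h1 h2
    apply mul_right_cancel₀ (b := Polynomial.X + Polynomial.C (1:ℂ))
      (Polynomial.X_add_C_ne_zero 1)
    rw [← h1, ← h2]
  have key : ∏ i ∈ Finset.range d, (1 + Polynomial.C (ω^i) * Polynomial.X)
      = Polynomial.C (ω^(∑ i ∈ Finset.range d, i))
          * (Polynomial.X^d - Polynomial.C ((-1:ℂ)^d)) := by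
    calc ∏ i ∈ Finset.range d, (1 + Polynomial.C (ω^i) * Polynomial.X)
        = ∏ i ∈ Finset.range d,
            (Polynomial.C (ω^i) * (Polynomial.X + Polynomial.C (ω^(d-i)))) := by
          apply Finset.prod_congr rfl
          intro i hi
          rw [Finset.mem_range] at hi
          rw [mul_add, ← Polynomial.C_mul, ← pow_add, show i + (d - i) = d by omega,
            hω.pow_eq_one, Polynomial.C_1]
          ring
      _ = (∏ i ∈ Finset.range d, Polynomial.C (ω^i))
            * ∏ i ∈ Finset.range d, (Polynomial.X + Polynomial.C (ω^(d-i))) :=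
          Finset.prod_mul_distrib
      _ = Polynomial.C (ω^(∑ i ∈ Finset.range d, i))
            * ∏ i ∈ Finset.range d, (Polynomial.X + Polynomial.C (ω^i)) := by
          rw [← map_prod, Finset.prod_pow_eq_pow_sum, r1, r2]
      _ = _ := by rw [prod_X_add_aux hd hω]
  have h0 := congrArg (Polynomial.eval (0:ℂ)) key
  simp [Polynomial.eval_prod, zero_pow hd.ne'] at h0
  have hsc : (ω ^ ∑ i ∈ Finset.range d, i) * (-1:ℂ) ^ d = -1 := by linear_combination h0
  rw [key, mul_sub, ← Polynomial.C_mul, hsc]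
  simp only [map_neg, Polynomial.C_1]
  ring

lemma gf1 (ω : ℂ) (m : ℕ) :
    ∏ i ∈ Finset.range m, (1 + Polynomial.C (ω^i) * Polynomial.X) =
    ∑ k ∈ Finset.range (m+1),
      Polynomial.C (ω^(∑ i ∈ Finset.range k, i) * Polynomial.aeval ω (qbinom m k))
        * Polynomial.X^k := by
  have := gf ω m 1
  simp only [mul_one, one_pow] at this
  exact this

lemma coeff_gf (ω : ℂ) (m k : ℕ) :
    (∏ i ∈ Finset.range m, (1 + Polynomial.C (ω^i) * Polynomial.X)).coeff k =
      ω^(∑ i ∈ Finset.range k, i) * Polynomial.aeval ω (qbinom m k) := by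
  rw [gf1, Polynomial.finset_sum_coeff]
  simp only [Polynomial.coeff_C_mul, Polynomial.coeff_X_pow]
  rw [Finset.sum_congr rfl (fun j _ => by
    rw [mul_ite, mul_one, mul_zero])]
  rw [Finset.sum_ite_eq (Finset.range (m+1)) k
    (fun j => ω^(∑ i ∈ Finset.range j, i) * Polynomial.aeval ω (qbinom m j))]
  by_cases h : k ∈ Finset.range (m+1)
  · rw [if_pos h]
  · rw [if_neg h]
    rw [Finset.mem_range] at h
    rw [qbinom_eq_zero m k (by omega)]
    simp

section Lucas
variable {d : ℕ} {ω : ℂ}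

lemma T_add (x y : ℕ) : (∑ i ∈ Finset.range (x+y), i)
    = (∑ i ∈ Finset.range x, i) + x*y + (∑ i ∈ Finset.range y, i) := by
  rw [Finset.sum_range_add, Finset.sum_add_distrib, Finset.sum_const,
    Finset.card_range, smul_eq_mul]
  ring

lemma omega_ne_zero (hd : 2 ≤ d) (hω : IsPrimitiveRoot ω d) : ω ≠ 0 := by
  intro h
  have := hω.pow_eq_one
  rw [h, zero_pow (by omega : d ≠ 0)] at this
  exact one_ne_zero this.symm

lemma qb_block (hd : 2 ≤ d) (hω : IsPrimitiveRoot ω d) (m k : ℕ) :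
    Polynomial.aeval ω (qbinom (d + m) k) =
      Polynomial.aeval ω (qbinom m k) +
        (if d ≤ k then Polynomial.aeval ω (qbinom m (k - d)) else 0) := by
  have hωne : ω ≠ 0 := omega_ne_zero hd hω
  have hd0 : 0 < d := by omega
  have hblock : ∏ i ∈ Finset.range (d + m), (1 + Polynomial.C (ω^i) * Polynomial.X)
      = (∏ i ∈ Finset.range m, (1 + Polynomial.C (ω^i) * Polynomial.X))
        * Polynomial.C (ω^(∑ i ∈ Finset.range d, i)) * Polynomial.X^d
        + ∏ i ∈ Finset.range m, (1 + Polynomial.C (ω^i) * Polynomial.X) := by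
    rw [Finset.prod_range_add]
    have hcg : ∏ i ∈ Finset.range m, (1 + Polynomial.C (ω^(d + i)) * Polynomial.X)
          = ∏ i ∈ Finset.range m, (1 + Polynomial.C (ω^i) * Polynomial.X) := by
      apply Finset.prod_congr rfl
      intro i _
      rw [pow_add, hω.pow_eq_one, one_mul]
    rw [hcg, prod_one_add hd0 hω]
    ring
  have hc := congrArg (fun p => Polynomial.coeff p k) hblock
  simp only [coeff_gf, Polynomial.coeff_add] at hc
  rw [Polynomial.coeff_mul_X_pow', Polynomial.coeff_mul_C, coeff_gf] at hc
  by_cases hk : d ≤ k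
  · rw [if_pos hk] at hc
    rw [if_pos hk]
    have hT : (∑ i ∈ Finset.range k, i)
        = (∑ i ∈ Finset.range (k-d), i) + (k-d)*d + (∑ i ∈ Finset.range d, i) := by
      rw [← T_add (k-d) d, show k - d + d = k by omega]
    have hpow : ω^(∑ i ∈ Finset.range k, i)
        = ω^(∑ i ∈ Finset.range (k-d), i) * ω^(∑ i ∈ Finset.range d, i) := by
      rw [hT, pow_add, pow_add, mul_comm (k-d) d, pow_mul, hω.pow_eq_one, one_pow, mul_one]
    apply mul_left_cancel₀ (pow_ne_zero (∑ i ∈ Finset.range k, i) hωne)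
    rw [mul_add, hc, hpow]
    ring
  · rw [if_neg hk] at hc
    rw [if_neg hk]
    apply mul_left_cancel₀ (pow_ne_zero (∑ i ∈ Finset.range k, i) hωne)
    rw [hc]
    ring

lemma lucas_aux (hd : 2 ≤ d) (hω : IsPrimitiveRoot ω d) :
    ∀ q r k : ℕ, r < d →
      Polynomial.aeval ω (qbinom (q*d + r) k) =
        (Nat.choose q (k/d) : ℂ) * Polynomial.aeval ω (qbinom r (k % d)) := by
  intro q
  induction q with
  | zero =>
    intro r k hr
    simp only [zero_mul, zero_add]
    by_cases hk : k < d
    · rw [Nat.div_eq_of_lt hk, Nat.mod_eq_of_lt hk, Nat.choose_self]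
      simp
    · rw [Nat.choose_eq_zero_of_lt (by
        have : 1 ≤ k / d := (Nat.one_le_div_iff (by omega)).2 (by omega)
        omega)]
      rw [qbinom_eq_zero r k (by omega)]
      simp
  | succ q ih =>
    intro r k hr
    have : (q+1)*d + r = d + (q*d + r) := by ring
    rw [this, qb_block hd hω]
    by_cases hk : d ≤ k
    · rw [if_pos hk, ih r k hr, ih r (k-d) hr]
      obtain ⟨j, rfl⟩ : ∃ j, k = j + d := ⟨k - d, by omega⟩
      rw [Nat.add_sub_cancel, Nat.add_div_right _ (by omega), Nat.add_mod_right]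
      rw [Nat.choose_succ_succ]
      push_cast
      ring
    · rw [if_neg hk, add_zero, ih r k hr]
      rw [Nat.div_eq_of_lt (by omega), Nat.choose_zero_right, Nat.choose_zero_right]

lemma lucas (hd : 2 ≤ d) (hω : IsPrimitiveRoot ω d) (m k : ℕ) :
    Polynomial.aeval ω (qbinom m k) =
      (Nat.choose (m/d) (k/d) : ℂ) * Polynomial.aeval ω (qbinom (m % d) (k % d)) := by
  have h := lucas_aux hd hω (m/d) (m%d) k (Nat.mod_lt _ (by omega))
  rwa [Nat.div_add_mod' m d] at h
end Lucas

-- qint evaluation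
lemma qint_aeval (ω : ℂ) (m : ℕ) :
    Polynomial.aeval ω (qint m) = ∑ i ∈ Finset.range m, ω^i := by
  simp [qint]

lemma geom_block {d : ℕ} {ω : ℂ} (hd : 2 ≤ d) (hω : IsPrimitiveRoot ω d) :
    ∀ q r : ℕ, ∑ i ∈ Finset.range (q*d + r), ω^i = ∑ i ∈ Finset.range r, ω^i := by
  intro q
  induction q with
  | zero => intro r; simp
  | succ q ih =>
    intro r
    rw [show (q+1)*d + r = d + (q*d + r) by ring, Finset.sum_range_add]
    have : ∑ i ∈ Finset.range (q*d+r), ω^(d+i) = ∑ i ∈ Finset.range (q*d+r), ω^i := by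
      apply Finset.sum_congr rfl
      intro i _
      rw [pow_add, hω.pow_eq_one, one_mul]
    rw [this, ih, hω.geom_sum_eq_zero (by omega), zero_add]

lemma qint_ne (ω : ℂ) {d : ℕ} (hd : 2 ≤ d) (hω : IsPrimitiveRoot ω d) :
    Polynomial.aeval ω (qint (d-1)) ≠ 0 := by
  rw [qint_aeval, geom_sum_eq (hω.ne_one (by omega))]
  apply div_ne_zero
  · rw [sub_ne_zero]
    exact hω.pow_ne_one_of_pos_of_lt (by omega) (by omega)
  · rw [sub_ne_zero]
    exact hω.ne_one (by omega)

-- qfact nonzero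
lemma qfact_ne_zero (m : ℕ) : qfact m ≠ 0 := by
  intro h
  have := congrArg (Polynomial.eval (1:ℤ)) h
  rw [qfact, Polynomial.eval_prod] at this
  simp only [Polynomial.eval_zero] at this
  have hpos : ∀ i ∈ Finset.range m, Polynomial.eval (1:ℤ) (qint (i+1)) = (i+1 : ℤ) := by
    intro i _
    simp [qint]
  rw [Finset.prod_congr rfl hpos] at this
  have : (0:ℤ) < ∏ i ∈ Finset.range m, (i+1 : ℤ) := Finset.prod_pos (by intro i _; omega)
  omega

-- choose / mult4
lemma choose_mult4 (p A B C : ℕ) : mult4 p A B C =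
    Nat.choose (p+A+B+C) A * Nat.choose (p+B+C) B * Nat.choose (p+C) C := by
  unfold mult4
  have h1 := Nat.choose_mul_factorial_mul_factorial (show A ≤ p+A+B+C by omega)
  have h2 := Nat.choose_mul_factorial_mul_factorial (show B ≤ p+B+C by omega)
  have h3 := Nat.choose_mul_factorial_mul_factorial (show C ≤ p+C by omega)
  rw [show p+A+B+C-A = p+B+C by omega] at h1
  rw [show p+B+C-B = p+C by omega] at h2
  rw [show p+C-C = p by omega] at h3
  apply Nat.div_eq_of_eq_mul_left
  · positivity
  calc (p+A+B+C).factorial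
      = Nat.choose (p+A+B+C) A * A.factorial * (p+B+C).factorial := h1.symm
    _ = Nat.choose (p+A+B+C) A * A.factorial *
        (Nat.choose (p+B+C) B * B.factorial * (p+C).factorial) := by rw [h2]
    _ = Nat.choose (p+A+B+C) A * A.factorial *
        (Nat.choose (p+B+C) B * B.factorial *
          (Nat.choose (p+C) C * C.factorial * p.factorial)) := by rw [h3]
    _ = Nat.choose (p+A+B+C) A * Nat.choose (p+B+C) B * Nat.choose (p+C) C *
        (p.factorial * A.factorial * B.factorial * C.factorial) := by ring
  -- target shape: a = b * c with c = p! * (A! * (B! * C!))? need to match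
lemma divmod {d : ℕ} (hd : 0 < d) {x u v : ℕ} (hu : u < d) (hx : x = d*v + u) :
    x / d = v ∧ x % d = u := by
  subst hx
  exact ⟨by rw [Nat.mul_add_div hd, Nat.div_eq_of_lt hu, add_zero],
    by rw [Nat.mul_add_mod, Nat.mod_eq_of_lt hu]⟩

theorem main_case
    (d : ℕ) (hd : 2 ≤ d) (ω : ℂ) (hω : IsPrimitiveRoot ω d)
    (n : ℕ) (hdn : d ∣ n) (hnd : d ≤ n)
    (a b c : ℕ) (ha : a % d = 1) (hb : b % d = 0) (hc : c % d = 0)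
    (M : Polynomial ℤ)
    (hM : M * (qfact (n - 2) * qfact a * qfact b * qfact c) = qfact (n - 2 + a + b + c)) :
    Polynomial.aeval ω M / Polynomial.aeval ω (qint (n - 1)) =
      (mult4 (n / d - 1) (a / d) (b / d) (c / d) : ℂ) := by
  have hd0 : 0 < d := by omega
  obtain ⟨q0, rfl⟩ := hdn
  obtain ⟨qa, rfl⟩ : ∃ qa, a = d*qa + 1 :=
    ⟨a/d, by conv_lhs => rw [← Nat.div_add_mod a d, ha]⟩
  obtain ⟨qb, rfl⟩ : ∃ qb, b = d*qb :=
    ⟨b/d, by conv_lhs => rw [← Nat.div_add_mod b d, hb, add_zero]⟩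
  obtain ⟨qc, rfl⟩ : ∃ qc, c = d*qc :=
    ⟨c/d, by conv_lhs => rw [← Nat.div_add_mod c d, hc, add_zero]⟩
  have hq0 : 1 ≤ q0 := by
    rcases Nat.eq_zero_or_pos q0 with h | h
    · subst h; omega
    · omega
  have h2n : 2 ≤ d * q0 := le_trans hd (Nat.le_mul_of_pos_right d hq0)
  -- uniqueness of M
  set m0 := d * q0 - 2 with hm0
  have h1 := qbinom_mul_qfact (m0 + d*qc) (d*qc) m0 (by omega)
  have h2 := qbinom_mul_qfact (m0 + d*qb + d*qc) (d*qb) (m0 + d*qc) (by omega)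
  have h3 := qbinom_mul_qfact (m0 + (d*qa+1) + d*qb + d*qc) (d*qa+1) (m0 + d*qb + d*qc)
    (by omega)
  have hP : (qbinom (m0 + (d*qa+1) + d*qb + d*qc) (d*qa+1) *
        qbinom (m0 + d*qb + d*qc) (d*qb) * qbinom (m0 + d*qc) (d*qc)) *
      (qfact m0 * qfact (d*qa+1) * qfact (d*qb) * qfact (d*qc)) =
      qfact (m0 + (d*qa+1) + d*qb + d*qc) := by
    linear_combination h3 + (qbinom (m0 + (d*qa+1) + d*qb + d*qc) (d*qa+1) *
      qfact (d*qa+1)) * h2 + (qbinom (m0 + (d*qa+1) + d*qb + d*qc) (d*qa+1) *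
      qfact (d*qa+1) * qbinom (m0 + d*qb + d*qc) (d*qb) * qfact (d*qb)) * h1
  have hMP : M = qbinom (m0 + (d*qa+1) + d*qb + d*qc) (d*qa+1) *
      qbinom (m0 + d*qb + d*qc) (d*qb) * qbinom (m0 + d*qc) (d*qc) := by
    apply mul_right_cancel₀ (b := qfact m0 * qfact (d*qa+1) * qfact (d*qb) * qfact (d*qc))
    · intro h
      rcases mul_eq_zero.1 h with h' | h'
      · rcases mul_eq_zero.1 h' with h'' | h''
        · rcases mul_eq_zero.1 h'' with h3' | h3'
          · exact qfact_ne_zero _ h3'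
          · exact qfact_ne_zero _ h3'
        · exact qfact_ne_zero _ h''
      · exact qfact_ne_zero _ h'
    · rw [hP]; exact hM
  -- divmod facts
  have e1 : m0 + (d*qa+1) + d*qb + d*qc = d*(q0+qa+qb+qc-1) + (d-1) := by
    rw [hm0]
    zify [h2n, hd, show 1 ≤ q0+qa+qb+qc by omega, show 1 ≤ d by omega]
    ring
  have e2 : m0 + d*qb + d*qc = d*(q0+qb+qc-1) + (d-2) := by
    rw [hm0]
    zify [h2n, hd, show 1 ≤ q0+qb+qc by omega, show 2 ≤ d by omega]
    ring
  have e3 : m0 + d*qc = d*(q0+qc-1) + (d-2) := by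
    rw [hm0]
    zify [h2n, hd, show 1 ≤ q0+qc by omega, show 2 ≤ d by omega]
    ring
  have e4 : d*q0 - 1 = d*(q0-1) + (d-1) := by
    zify [show 1 ≤ d*q0 by omega, show 1 ≤ q0 by omega, show 1 ≤ d by omega]
    ring
  have dmN := divmod hd0 (show d-1 < d by omega) e1
  have dmN1 := divmod hd0 (show d-2 < d by omega) e2
  have dmN2 := divmod hd0 (show d-2 < d by omega) e3
  have dma := divmod hd0 (show 1 < d by omega) (rfl : d*qa+1 = d*qa+1)
  have dmb : (d*qb)/d = qb ∧ (d*qb) % d = 0 := divmod hd0 (show 0 < d by omega) (by omega)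
  have dmc : (d*qc)/d = qc ∧ (d*qc) % d = 0 := divmod hd0 (show 0 < d by omega) (by omega)
  -- evaluations
  have hEa : Polynomial.aeval ω (qbinom (m0 + (d*qa+1) + d*qb + d*qc) (d*qa+1)) =
      (Nat.choose (q0+qa+qb+qc-1) qa : ℂ) * Polynomial.aeval ω (qint (d-1)) := by
    rw [lucas hd hω, dmN.1, dmN.2, dma.1, dma.2, qbinom_one]
  have hEb : Polynomial.aeval ω (qbinom (m0 + d*qb + d*qc) (d*qb)) =
      (Nat.choose (q0+qb+qc-1) qb : ℂ) := by
    rw [lucas hd hω, dmN1.1, dmN1.2, dmb.1, dmb.2, qbinom_zero, map_one, mul_one]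
  have hEc : Polynomial.aeval ω (qbinom (m0 + d*qc) (d*qc)) =
      (Nat.choose (q0+qc-1) qc : ℂ) := by
    rw [lucas hd hω, dmN2.1, dmN2.2, dmc.1, dmc.2, qbinom_zero, map_one, mul_one]
  have hG : Polynomial.aeval ω (qint (d*q0 - 1)) = Polynomial.aeval ω (qint (d-1)) := by
    rw [qint_aeval, qint_aeval, show d*q0-1 = (q0-1)*d + (d-1) from by rw [e4]; ring,
      geom_block hd hω]
  rw [hMP, map_mul, map_mul, hEa, hEb, hEc, hG, dma.1, dmb.1, dmc.1,
    Nat.mul_div_cancel_left q0 hd0]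
  rw [div_eq_iff (qint_ne ω hd hω), choose_mult4 (q0-1) qa qb qc,
    show q0+qa+qb+qc-1 = q0-1+qa+qb+qc by omega,
    show q0+qb+qc-1 = q0-1+qb+qc by omega,
    show q0+qc-1 = q0-1+qc by omega]
  push_cast
  ring

lemma mult4_swap12 (p x y z : ℕ) : mult4 p x y z = mult4 p y x z := by
  unfold mult4
  rw [show p+x+y+z = p+y+x+z by omega]
  congr 1
  ring

lemma mult4_rot (p x y z : ℕ) : mult4 p x y z = mult4 p y z x := by
  unfold mult4
  rw [show p+x+y+z = p+y+z+x by omega]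
  congr 1
  ring

/-- Let `d ≥ 2`, `ω` a primitive `d`-th root of unity, `n ≡ 0 (mod d)`
with `n ≥ d`, and let `a, b, c` be non-negative integers such that exactly one of them
is `≡ 1 (mod d)` and the other two are `≡ 0 (mod d)`.  Let `M` be the q-multinomial
coefficient `qmultinomial(n−2+a+b+c; n−2,a,b,c)`, characterised by
`M·([n−2]_q!·[a]_q!·[b]_q!·[c]_q!) = [n−2+a+b+c]_q!`.  Then
`(1/[n−1]_ω)·M(ω) = multinomial(⌊(n+a+b+c)/d⌋−1; n/d−1, ⌊a/d⌋, ⌊b/d⌋, ⌊c/d⌋)`. -/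
theorem qmultinomial_eval_one_one
    (d : ℕ) (hd : 2 ≤ d) (ω : ℂ) (hω : IsPrimitiveRoot ω d)
    (n : ℕ) (hdn : d ∣ n) (hnd : d ≤ n)
    (a b c : ℕ)
    (hcong : (a % d = 1 ∧ b % d = 0 ∧ c % d = 0) ∨
             (a % d = 0 ∧ b % d = 1 ∧ c % d = 0) ∨
             (a % d = 0 ∧ b % d = 0 ∧ c % d = 1))
    (M : Polynomial ℤ)
    (hM : M * (qfact (n - 2) * qfact a * qfact b * qfact c) = qfact (n - 2 + a + b + c)) :
    Polynomial.aeval ω M / Polynomial.aeval ω (qint (n - 1)) =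
      (mult4 (n / d - 1) (a / d) (b / d) (c / d) : ℂ) := by
  rcases hcong with ⟨ha, hb, hc⟩ | ⟨ha, hb, hc⟩ | ⟨ha, hb, hc⟩
  · exact main_case d hd ω hω n hdn hnd a b c ha hb hc M hM
  · have hM' : M * (qfact (n-2) * qfact b * qfact a * qfact c) = qfact (n-2+b+a+c) := by
      rw [show n-2+b+a+c = n-2+a+b+c by omega]
      linear_combination hM
    have h := main_case d hd ω hω n hdn hnd b a c hb ha hc M hM'
    rw [h]
    exact_mod_cast congrArg Nat.cast (mult4_swap12 (n/d-1) (b/d) (a/d) (c/d))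
  · have hM' : M * (qfact (n-2) * qfact c * qfact a * qfact b) = qfact (n-2+c+a+b) := by
      rw [show n-2+c+a+b = n-2+a+b+c by omega]
      linear_combination hM
    have h := main_case d hd ω hω n hdn hnd c a b hc ha hb M hM'
    rw [h]
    exact_mod_cast congrArg Nat.cast (mult4_rot (n/d-1) (c/d) (a/d) (b/d))
end

section
/- Let d = 2, ω = −1, n ≡ 0 (mod 2), n ≥ 2, and a, b, c non-negative integers all ≡ 0 (mod 2). Then (1/[n−1]_ω) · qmultinomial(n−2+a+b+c; n−2,a,b,c)(ω) = multinomial((n+a+b+c)/2 − 1; n/2 − 1, a/2, b/2, c/2). -/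
noncomputable def eE (j : ℕ) : Polynomial ℤ := ∑ i ∈ Finset.range (j+1), Polynomial.X ^ (2*i)

lemma qint_even (j : ℕ) : qint (2*(j+1)) = (1 + Polynomial.X) * eE j := by
  induction j with
  | zero => simp [qint, eE, Finset.sum_range_succ]
  | succ k ih =>
    have h : 2*(k+1+1) = (2*(k+1)) + 1 + 1 := by ring
    rw [h]
    unfold qint eE at *
    rw [Finset.sum_range_succ, Finset.sum_range_succ, ih]
    conv_rhs => rw [Finset.sum_range_succ]
    ring

lemma qfact_even (t : ℕ) : qfact (2*t) =
    (1 + Polynomial.X)^t * ((∏ j ∈ Finset.range t, qint (2*j+1)) *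
      (∏ j ∈ Finset.range t, eE j)) := by
  induction t with
  | zero => simp [qfact]
  | succ k ih =>
    have h : 2*(k+1) = (2*k) + 1 + 1 := by ring
    unfold qfact at *
    rw [h, Finset.prod_range_succ, Finset.prod_range_succ, ih,
      Finset.prod_range_succ, Finset.prod_range_succ]
    have h2 : (2*k) + 1 + 1 = 2*(k+1) := by ring
    rw [h2, qint_even]
    ring

lemma aeval_qint_odd (j : ℕ) : Polynomial.aeval (-1 : ℂ) (qint (2*j+1)) = 1 := by
  simp only [qint, map_sum, map_pow, Polynomial.aeval_X]
  rw [neg_one_geom_sum]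
  simp [Nat.even_add_one, parity_simps]

lemma aeval_eE (j : ℕ) : Polynomial.aeval (-1 : ℂ) (eE j) = (j+1 : ℂ) := by
  simp [eE, pow_mul]

lemma dvd4 (w x y z : ℕ) :
    w.factorial * x.factorial * y.factorial * z.factorial ∣ (w+x+y+z).factorial := by
  have h1 := Nat.factorial_mul_factorial_dvd_factorial_add w x
  have h2 := Nat.factorial_mul_factorial_dvd_factorial_add (w+x) y
  have h3 := Nat.factorial_mul_factorial_dvd_factorial_add (w+x+y) z
  calc w.factorial * x.factorial * y.factorial * z.factorial
      ∣ (w+x).factorial * y.factorial * z.factorial := by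
        exact mul_dvd_mul_right (mul_dvd_mul_right h1 _) _
    _ ∣ (w+x+y).factorial * z.factorial := mul_dvd_mul_right h2 _
    _ ∣ (w+x+y+z).factorial := h3

lemma prod_fact (t : ℕ) : ∏ j ∈ Finset.range t, ((j : ℂ)+1) = (t.factorial : ℂ) := by
  induction t with
  | zero => simp
  | succ k ih =>
    rw [Finset.prod_range_succ, ih, Nat.factorial_succ]
    push_cast; ring

/-- Let `d = 2`, `ω = −1`, `n ≡ 0 (mod 2)` with `n ≥ 2`, and `a, b, c`
even non-negative integers.  With `M = qmultinomial(n−2+a+b+c; n−2,a,b,c)` characterised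
by `M·([n−2]_q!·[a]_q!·[b]_q!·[c]_q!) = [n−2+a+b+c]_q!`, we have
`(1/[n−1]_{−1})·M(−1) = multinomial((n+a+b+c)/2−1; n/2−1, a/2, b/2, c/2)`. -/
theorem qmultinomial_eval_minus_one
    (n : ℕ) (hn2 : 2 ∣ n) (hn : 2 ≤ n)
    (a b c : ℕ) (ha : 2 ∣ a) (hb : 2 ∣ b) (hc : 2 ∣ c)
    (M : Polynomial ℤ)
    (hM : M * (qfact (n - 2) * qfact a * qfact b * qfact c) = qfact (n - 2 + a + b + c)) :
    Polynomial.aeval (-1 : ℂ) M / Polynomial.aeval (-1 : ℂ) (qint (n - 1)) =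
      (mult4 (n / 2 - 1) (a / 2) (b / 2) (c / 2) : ℂ) := by
  obtain ⟨k, rfl⟩ := hn2
  obtain ⟨a1, rfl⟩ := ha
  obtain ⟨b1, rfl⟩ := hb
  obtain ⟨c1, rfl⟩ := hc
  have hk : 1 ≤ k := by omega
  set n1 := k - 1 with hn1
  set T := n1 + a1 + b1 + c1 with hT
  have hsub : 2*k - 2 = 2*n1 := by omega
  have hN : 2*n1 + 2*a1 + 2*b1 + 2*c1 = 2*T := by omega
  rw [hsub, hN, qfact_even, qfact_even, qfact_even, qfact_even, qfact_even] at hM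
  have hx : (1 + Polynomial.X : Polynomial ℤ) ≠ 0 := by
    intro h
    have := congrArg (Polynomial.eval 0) h
    simp at this
  have key : (1 + Polynomial.X : Polynomial ℤ)^T *
      (M * (((∏ j ∈ Finset.range n1, qint (2*j+1)) * (∏ j ∈ Finset.range n1, eE j)) *
        ((∏ j ∈ Finset.range a1, qint (2*j+1)) * (∏ j ∈ Finset.range a1, eE j)) *
        ((∏ j ∈ Finset.range b1, qint (2*j+1)) * (∏ j ∈ Finset.range b1, eE j)) *
        ((∏ j ∈ Finset.range c1, qint (2*j+1)) * (∏ j ∈ Finset.range c1, eE j)))) =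
      (1 + Polynomial.X : Polynomial ℤ)^T *
      ((∏ j ∈ Finset.range T, qint (2*j+1)) * (∏ j ∈ Finset.range T, eE j)) := by
    rw [← hM, hT]
    ring
  have hM2 := mul_left_cancel₀ (pow_ne_zero T hx) key
  have hev := congrArg (Polynomial.aeval (-1 : ℂ)) hM2
  simp only [map_mul, map_prod, aeval_qint_odd, aeval_eE, Finset.prod_const_one,
    one_mul, prod_fact] at hev
  -- hev : aeval (-1) M * (n1! * a1! * b1! * c1!) = T!
  have h2 : (0:ℕ) < 2 := by norm_num
  rw [Nat.mul_div_cancel_left k h2, Nat.mul_div_cancel_left a1 h2,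
    Nat.mul_div_cancel_left b1 h2, Nat.mul_div_cancel_left c1 h2]
  have hodd : 2*k - 1 = 2*n1 + 1 := by omega
  rw [hodd, aeval_qint_odd, div_one]
  have hfne : ∀ m : ℕ, (m.factorial : ℂ) ≠ 0 := fun m =>
    Nat.cast_ne_zero.mpr (Nat.factorial_ne_zero m)
  have hmult : (mult4 n1 a1 b1 c1 : ℂ) *
      ((n1.factorial : ℂ) * a1.factorial * b1.factorial * c1.factorial) =
      (T.factorial : ℂ) := by
    have := Nat.div_mul_cancel (dvd4 n1 a1 b1 c1)
    have hcast := congrArg (fun m : ℕ => (m : ℂ)) this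
    push_cast at hcast
    rw [← hT] at hcast
    simpa [mult4, mul_assoc] using hcast
  have hden : ((n1.factorial : ℂ) * a1.factorial * b1.factorial * c1.factorial) ≠ 0 := by
    simp [hfne]
  have := hmult.trans hev.symm
  exact (mul_right_cancel₀ hden this).symm
end

section
/- Cyclic sieving criterion via orbit counting: let C be a cyclic group of order n acting on a finite set X. For 0 ≤ ℓ < n, let a_ℓ be the number of C-orbits whose stabiliser order divides ℓ, and set X(q) = Σ_{ℓ=0}^{n−1} a_ℓ q^ℓ. Then for every c ∈ C, X(ω_{o(c)}) = |X^c|, where o(c) is the order of c, ω_d is a primitive d-th root of unity, and X^c is the fixed-point set of c. -/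
open MulAction Finset

/-- In a finite cyclic group, an element lies in a subgroup iff its order divides the
subgroup's order. -/
private lemma mem_subgroup_iff_orderOf_dvd {C : Type*} [Group C] [IsCyclic C] [Fintype C]
    (H : Subgroup C) (c : C) : c ∈ H ↔ orderOf c ∣ Nat.card H := by
  classical
  constructor
  · exact fun h => H.orderOf_dvd_natCard h
  · intro hdvd
    have hs0 : 0 < Nat.card H := Nat.card_pos
    have hle := IsCyclic.card_pow_eq_one_le (α := C) hs0
    have hsub : (H : Set C).toFinset ⊆ ({a : C | a ^ (Nat.card H) = 1} : Finset C) := by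
      intro x hx
      simp only [Set.mem_toFinset, SetLike.mem_coe] at hx
      simp only [Finset.mem_filter, Finset.mem_univ, true_and, Set.mem_setOf_eq]
      exact orderOf_dvd_iff_pow_eq_one.mp (H.orderOf_dvd_natCard hx)
    have hcard : (H : Set C).toFinset.card = Nat.card H := by
      simp [Set.toFinset_card, Nat.card_eq_fintype_card]
    have heq : (H : Set C).toFinset = ({a : C | a ^ (Nat.card H) = 1} : Finset C) :=
      Finset.eq_of_subset_of_card_le hsub (by rw [hcard]; exact hle)
    have hc : c ∈ ({a : C | a ^ (Nat.card H) = 1} : Finset C) := by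
      simp only [Finset.mem_filter, Finset.mem_univ, true_and, Set.mem_setOf_eq]
      exact orderOf_dvd_iff_pow_eq_one.mp hdvd
    rw [← heq] at hc
    simpa using hc

private lemma aux_geom_sum {ω : ℂ} {d s n : ℕ} (hω : IsPrimitiveRoot ω d) (hd : d ∣ n)
    (hs : s ∣ n) (hs0 : 0 < s) :
    (∑ ℓ ∈ Finset.range n, if s ∣ ℓ then ω ^ ℓ else 0) =
      if d ∣ s then ((n / s : ℕ) : ℂ) else 0 := by
  have hωn : ω ^ n = 1 := by
    obtain ⟨k, rfl⟩ := hd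
    rw [pow_mul, hω.pow_eq_one, one_pow]
  have h1 : (∑ ℓ ∈ Finset.range n, if s ∣ ℓ then ω ^ ℓ else 0) =
      ∑ j ∈ Finset.range (n / s), (ω ^ s) ^ j := by
    rw [← Finset.sum_filter]
    refine Finset.sum_nbij' (fun ℓ => ℓ / s) (fun j => s * j) ?_ ?_ ?_ ?_ ?_
    · intro ℓ hℓ
      simp only [Finset.mem_filter, Finset.mem_range] at hℓ
      exact Finset.mem_range.mpr (Nat.div_lt_div_of_lt_of_dvd hs hℓ.1)
    · intro j hj
      simp only [Finset.mem_range] at hj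
      refine Finset.mem_filter.mpr ⟨Finset.mem_range.mpr ?_, Dvd.intro j rfl⟩
      calc s * j < s * (n / s) := by exact Nat.mul_lt_mul_of_le_of_lt (le_refl s) hj hs0
        _ = n := Nat.mul_div_cancel' hs
    · intro ℓ hℓ
      simp only [Finset.mem_filter, Finset.mem_range] at hℓ
      exact Nat.mul_div_cancel' hℓ.2
    · intro j hj
      exact Nat.mul_div_cancel_left j hs0
    · intro ℓ hℓ
      simp only [Finset.mem_filter, Finset.mem_range] at hℓ
      rw [← pow_mul, Nat.mul_div_cancel' hℓ.2]
  rw [h1]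
  by_cases h : ω ^ s = 1
  · rw [if_pos ((hω.pow_eq_one_iff_dvd s).mp h)]
    simp [h, Finset.card_range]
  · rw [if_neg (fun hds => h ((hω.pow_eq_one_iff_dvd s).mpr hds))]
    rw [geom_sum_eq h]
    rw [← pow_mul, Nat.mul_div_cancel' hs, hωn, sub_self, zero_div]

/-- cyclic sieving criterion via orbit counting.  Let `C` be a
cyclic group of order `n` acting on a finite set `X`.  For `0 ≤ ℓ < n` let `a_ℓ` be the
number of `C`-orbits whose stabiliser order divides `ℓ`, and set
`X(q) = Σ_{ℓ=0}^{n−1} a_ℓ q^ℓ`.  Then for every `c ∈ C` and every primitive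
`o(c)`-th root of unity `ω`, `X(ω) = |X^c|`, where `o(c)` is the order of `c` and
`X^c` is the set of fixed points of `c`. -/
theorem cyclic_sieving_orbit_polynomial
    (C : Type*) [Group C] [IsCyclic C] [Fintype C]
    (X : Type*) [Fintype X] [MulAction C X]
    (n : ℕ) (hn : n = Nat.card C)
    (a : ℕ → ℕ)
    (ha : ∀ ℓ, a ℓ = Nat.card {o : MulAction.orbitRel.Quotient C X //
      Nat.card (MulAction.stabilizer C o.out) ∣ ℓ})
    (c : C) (ω : ℂ) (hω : IsPrimitiveRoot ω (orderOf c)) :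
    ∑ ℓ ∈ Finset.range n, (a ℓ : ℂ) * ω ^ ℓ = (Nat.card {x : X // c • x = x} : ℂ) := by
  classical
  letI : Fintype (MulAction.orbitRel.Quotient C X) := Fintype.ofFinite _
  set Ω := MulAction.orbitRel.Quotient C X with hΩ
  set d := orderOf c with hd
  set s : Ω → ℕ := fun o => Nat.card (MulAction.stabilizer C o.out) with hsdef
  have hdn : d ∣ n := by rw [hn]; exact orderOf_dvd_natCard c
  have hso : ∀ o : Ω, s o ∣ n := fun o => by
    rw [hn]; exact Subgroup.card_subgroup_dvd_card _
  have hs0 : ∀ o : Ω, 0 < s o := fun o => Nat.card_pos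
  -- commutativity of C
  have hcomm : ∀ a b : C, a * b = b * a := by
    obtain ⟨g₀, hg₀⟩ := IsCyclic.exists_generator (α := C)
    intro x y
    obtain ⟨i, rfl⟩ := hg₀ x
    obtain ⟨j, rfl⟩ := hg₀ y
    rw [← zpow_add, ← zpow_add, add_comm]
  -- LHS computation
  have hA : ∀ ℓ, (a ℓ : ℂ) = ∑ o : Ω, (if s o ∣ ℓ then (1 : ℂ) else 0) := by
    intro ℓ
    rw [ha ℓ, Nat.card_eq_fintype_card, Fintype.card_subtype, Finset.card_filter,
      Nat.cast_sum]
    exact Finset.sum_congr rfl fun o _ => by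
      simp only [apply_ite (Nat.cast : ℕ → ℂ), Nat.cast_one, Nat.cast_zero]
      rfl
  have hLHS : ∑ ℓ ∈ Finset.range n, (a ℓ : ℂ) * ω ^ ℓ =
      ∑ o : Ω, (if d ∣ s o then ((n / s o : ℕ) : ℂ) else 0) := by
    calc ∑ ℓ ∈ Finset.range n, (a ℓ : ℂ) * ω ^ ℓ
        = ∑ ℓ ∈ Finset.range n, ∑ o : Ω, (if s o ∣ ℓ then ω ^ ℓ else 0) := by
          refine Finset.sum_congr rfl fun ℓ _ => ?_
          rw [hA ℓ, Finset.sum_mul]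
          refine Finset.sum_congr rfl fun o _ => ?_
          split_ifs <;> simp
      _ = ∑ o : Ω, ∑ ℓ ∈ Finset.range n, (if s o ∣ ℓ then ω ^ ℓ else 0) :=
          Finset.sum_comm
      _ = ∑ o : Ω, (if d ∣ s o then ((n / s o : ℕ) : ℂ) else 0) := by
          refine Finset.sum_congr rfl fun o _ => ?_
          exact aux_geom_sum hω hdn (hso o) (hs0 o)
  rw [hLHS]
  -- key pointwise fact
  have key : ∀ (o : Ω) (x : X), Quotient.mk (MulAction.orbitRel C X) x = o →
      (c • x = x ↔ c ∈ MulAction.stabilizer C o.out) := by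
    intro o x hx
    have hrel : x ∈ MulAction.orbit C o.out := by
      rw [← MulAction.orbitRel_apply (G := C)]
      exact Quotient.eq.mp (hx.trans (Quotient.out_eq o).symm)
    obtain ⟨g, rfl⟩ := hrel
    constructor
    · intro h
      have : (c * g) • o.out = g • o.out := by rwa [mul_smul]
      rw [hcomm c g, mul_smul] at this
      exact MulAction.mem_stabilizer_iff.mpr (smul_left_cancel g this)
    · intro h
      have hc : c • o.out = o.out := h
      calc c • g • o.out = (c * g) • o.out := (mul_smul _ _ _).symm
        _ = (g * c) • o.out := by rw [hcomm]
        _ = g • c • o.out := mul_smul _ _ _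
        _ = g • o.out := by rw [hc]
  -- orbit fiber cardinality
  have horbit_card : ∀ o : Ω,
      #(Finset.univ.filter fun x : X => Quotient.mk (MulAction.orbitRel C X) x = o) = n / s o := by
    intro o
    have h1 : (Finset.univ.filter fun x : X => Quotient.mk (MulAction.orbitRel C X) x = o)
        = (MulAction.orbit C o.out).toFinset := by
      ext x
      simp only [Finset.mem_filter, Finset.mem_univ, true_and, Set.mem_toFinset]
      constructor
      · intro hx
        rw [← MulAction.orbitRel_apply (G := C)]
        exact Quotient.eq.mp (hx.trans (Quotient.out_eq o).symm)
      · intro hx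
        rw [← Quotient.out_eq o]
        exact Quotient.sound ((MulAction.orbitRel_apply (G := C)).mpr hx)
    rw [h1, Set.toFinset_card]
    have h2 := MulAction.card_orbit_mul_card_stabilizer_eq_card_group C o.out
    have h3 : n = Fintype.card (MulAction.orbit C o.out) * s o := by
      rw [hn, Nat.card_eq_fintype_card, ← h2, hsdef]
      simp [Nat.card_eq_fintype_card]
    exact (Nat.div_eq_of_eq_mul_left (hs0 o) h3).symm
  -- RHS computation
  have hRHS : Nat.card {x : X // c • x = x} =
      ∑ o : Ω, (if d ∣ s o then n / s o else 0) := by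
    rw [Nat.card_eq_fintype_card, Fintype.card_subtype]
    rw [Finset.card_eq_sum_card_fiberwise
      (f := fun x : X => Quotient.mk (MulAction.orbitRel C X) x) (t := Finset.univ)
      (fun x _ => Finset.mem_univ _)]
    refine Finset.sum_congr rfl fun o _ => ?_
    by_cases hmem : c ∈ MulAction.stabilizer C o.out
    · rw [if_pos ((mem_subgroup_iff_orderOf_dvd _ c).mp hmem), ← horbit_card o]
      congr 1
      ext x
      simp only [Finset.mem_filter, Finset.mem_univ, true_and]
      constructor
      · exact fun h => h.2
      · intro h
        exact ⟨(key o x h).mpr hmem, h⟩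
    · rw [if_neg (fun hds => hmem ((mem_subgroup_iff_orderOf_dvd _ c).mpr hds))]
      rw [Finset.card_eq_zero]
      ext x
      simp only [Finset.mem_filter, Finset.mem_univ, true_and, Finset.notMem_empty,
        iff_false, not_and]
      intro hfix hx
      exact hmem ((key o x hx).mp hfix)
  rw [hRHS]
  push_cast [apply_ite (Nat.cast : ℕ → ℂ)]
  rfl
end

section
/- For n ≥ 1, the coefficient of z^n x^k y₁^ℓ y₂^m in z·P'(z,x,y₁,y₂)/(1−P(z,x,y₁,y₂)) equals multinomial(n−1+k+ℓ+m; n−1,k,ℓ,m)·binomial(n−1−k−ℓ−m, ℓ+m), where P is the power series satisfying P = z + xP² + (y₁+y₂)P³/(1−P) and the derivative is with respect to z. -/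
/- Binomial coefficient on integers, equal to 0 when b < 0 or b > a. -/
def binZ (a b : ℤ) : ℤ :=
  if 0 ≤ b ∧ b ≤ a then (a.toNat).choose b.toNat else 0

noncomputable section

/- The coefficient of z^n x^k y₁^ℓ y₂^m. -/
def pc (n k l m : ℕ) (F : PowerSeries R3) : ℚ :=
  MvPolynomial.coeff (mon k l m) (PowerSeries.coeff (R := R3) n F)

namespace St19

open PowerSeries Finset

lemma coeff_dF (f : PowerSeries R3) (n : ℕ) :
    PowerSeries.coeff n f.derivativeFun = PowerSeries.coeff (n + 1) f * (n + 1) :=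
  PowerSeries.coeff_derivative f n

lemma dF_C {r : R3} : (PowerSeries.C r).derivativeFun = 0 :=
  PowerSeries.derivative_C

def T : PowerSeries R3 := PowerSeries.mk fun _ => 1
def cx : PowerSeries R3 := PowerSeries.C (R := R3) (MvPolynomial.X 0)
def cS : PowerSeries R3 := PowerSeries.C (R := R3) (MvPolynomial.X 1 + MvPolynomial.X 2)
def Γ : PowerSeries R3 := cx + cS * (X * T)
def Ψ : PowerSeries R3 := 1 - X * Γ
def Qw : PowerSeries R3 := X * Ψ
def Rw : PowerSeries R3 := Ψ.invOfUnit 1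
def Ew : PowerSeries R3 := (1 - X) * Qw.derivativeFun
def Ei : PowerSeries R3 := Ew.invOfUnit 1

lemma hT : (1 - X) * T = 1 := by
  ext n
  rw [sub_mul, one_mul, map_sub]
  cases n with
  | zero => simp [T, PowerSeries.coeff_zero_eq_constantCoeff, map_mul]
  | succ n => simp [T, coeff_succ_X_mul, PowerSeries.coeff_one, coeff_mk]

lemma hT' : T.derivativeFun = T * T := by
  ext n
  rw [coeff_dF, PowerSeries.coeff_mul]
  simp [T, coeff_mk, Finset.Nat.card_antidiagonal, mul_comm]

lemma constΨ : PowerSeries.constantCoeff (R := R3) Ψ = 1 := by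
  simp [Ψ, Γ, map_sub, map_mul, PowerSeries.constantCoeff_X]

lemma hΨR : Ψ * Rw = 1 := PowerSeries.mul_invOfUnit Ψ 1 (by rw [constΨ, Units.val_one])

lemma hQR : Qw * Rw = X := by
  have : Qw * Rw = X * (Ψ * Rw) := by rw [Qw, mul_assoc]
  rw [this, hΨR, mul_one]

lemma dX : (X : PowerSeries R3).derivativeFun = 1 := by
  ext n
  rw [coeff_dF]
  cases n with
  | zero => simp
  | succ n => simp [PowerSeries.coeff_X, PowerSeries.coeff_one]

lemma hQ'R : Qw.derivativeFun * Rw + Qw * Rw.derivativeFun = 1 := by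
  have h := congrArg PowerSeries.derivativeFun hQR
  rw [PowerSeries.derivativeFun_mul, dX, smul_eq_mul, smul_eq_mul] at h
  linear_combination h

lemma constQ' : PowerSeries.constantCoeff (R := R3) Qw.derivativeFun = 1 := by
  rw [← PowerSeries.coeff_zero_eq_constantCoeff_apply, coeff_dF]
  rw [Qw, coeff_succ_X_mul, PowerSeries.coeff_zero_eq_constantCoeff_apply, constΨ]
  simp

lemma vanish {f : PowerSeries R3} (hf : PowerSeries.constantCoeff (R := R3) f = 0) :
    ∀ (i n : ℕ), n < i → PowerSeries.coeff (R := R3) n (f ^ i) = 0 := by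
  intro i
  induction i with
  | zero => omega
  | succ i ih =>
    intro n h
    rw [pow_succ, PowerSeries.coeff_mul]
    apply Finset.sum_eq_zero
    rintro ⟨a, b⟩ hab
    rw [Finset.HasAntidiagonal.mem_antidiagonal] at hab
    rcases Nat.lt_or_ge a i with h1 | h1
    · rw [ih a h1, zero_mul]
    · have ha : a = i := by omega
      have hb : b = 0 := by omega
      subst ha hb
      rw [PowerSeries.coeff_zero_eq_constantCoeff_apply, hf, mul_zero]

lemma constB : PowerSeries.constantCoeff (R := R3) (X * Γ) = 0 := by
  simp [map_mul, PowerSeries.constantCoeff_X]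

lemma hQw_expand : Qw = X - cx * X ^ 2 - cS * (X ^ 3 * T) := by
  rw [Qw, Ψ, Γ]; ring

lemma d_sq : (X ^ 2 : PowerSeries R3).derivativeFun = 2 * X := by
  rw [pow_two, PowerSeries.derivativeFun_mul, dX]
  simp [smul_eq_mul]; ring

lemma d_cube : (X ^ 3 : PowerSeries R3).derivativeFun = 3 * X ^ 2 := by
  have : (X ^ 3 : PowerSeries R3) = X ^ 2 * X := by ring
  rw [this, PowerSeries.derivativeFun_mul, dX, d_sq]
  simp [smul_eq_mul]; ring

lemma dsub (f g : PowerSeries R3) :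
    (f - g).derivativeFun = f.derivativeFun - g.derivativeFun := by
  ext n
  simp [coeff_dF, map_sub, sub_mul]

lemma hDQ : Qw.derivativeFun = 1 - 2 * cx * X - cS * (3 * X ^ 2 * T + X ^ 3 * (T * T)) := by
  rw [hQw_expand]
  rw [dsub, dsub]
  rw [PowerSeries.derivativeFun_mul (f := cx), PowerSeries.derivativeFun_mul (f := cS),
    PowerSeries.derivativeFun_mul (f := X ^ 3)]
  rw [dX, d_sq, hT', d_cube, cx, cS, dF_C, dF_C]
  simp only [smul_eq_mul]
  rw [← cx, ← cS]; ring

lemma cE1 : PowerSeries.C (R := R3) (2 + 2 * MvPolynomial.X 0) = 2 + 2 * cx := by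
  simp [cx, map_add, map_mul, map_ofNat]

lemma cE2 : PowerSeries.C (R := R3) (3 * (MvPolynomial.X 1 + MvPolynomial.X 2) - 3 * MvPolynomial.X 0)
    = 3 * cS - 3 * cx := by
  simp [cx, cS, map_sub, map_mul, map_ofNat]

lemma hE_eq : Ew = 1 + Qw - PowerSeries.C (R := R3) (2 + 2 * MvPolynomial.X 0) * X
    - PowerSeries.C (R := R3) (3 * (MvPolynomial.X 1 + MvPolynomial.X 2) - 3 * MvPolynomial.X 0) * X ^ 2 := by
  rw [Ew, hDQ, cE1, cE2, hQw_expand]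
  linear_combination (-3 * cS * X ^ 2 - cS * X ^ 3 * T) * hT

lemma constE : PowerSeries.constantCoeff (R := R3) Ew = 1 := by
  rw [Ew, map_mul, constQ', map_sub, map_one, PowerSeries.constantCoeff_X]
  ring

lemma hEEi : Ew * Ei = 1 := PowerSeries.mul_invOfUnit Ew 1 (by rw [constE, Units.val_one])

lemma hTE : T * Ew = Qw.derivativeFun := by
  rw [Ew]
  linear_combination Qw.derivativeFun * hT

lemma hQ'Ei : Qw.derivativeFun * Ei = T := by
  rw [← hTE, mul_assoc, hEEi, mul_one]

lemma dpow (f : PowerSeries R3) (j : ℕ) :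
    (f ^ (j + 1)).derivativeFun = ((j : PowerSeries R3) + 1) * f ^ j * f.derivativeFun := by
  induction j with
  | zero => simp
  | succ j ih =>
    have : f ^ (j + 2) = f ^ (j + 1) * f := by ring
    rw [this, PowerSeries.derivativeFun_mul, ih]
    simp only [smul_eq_mul]
    push_cast
    ring

lemma constR : PowerSeries.constantCoeff (R := R3) Rw = 1 := by
  rw [Rw, PowerSeries.constantCoeff_invOfUnit]; simp

lemma residue (m : ℕ) :
    PowerSeries.coeff (R := R3) m (Qw.derivativeFun * Rw ^ (m + 1)) = if m = 0 then 1 else 0 := by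
  cases m with
  | zero =>
    rw [zero_add, pow_one, PowerSeries.coeff_zero_eq_constantCoeff_apply, map_mul, constQ',
      constR, one_mul]
    simp
  | succ s =>
    have alg : ((s : PowerSeries R3) + 1) * (Qw.derivativeFun * Rw ^ (s + 2))
        = ((s : PowerSeries R3) + 1) * Rw ^ (s + 1) - X * (Rw ^ (s + 1)).derivativeFun := by
      rw [dpow]
      linear_combination (((s : PowerSeries R3) + 1) * Rw ^ (s + 1)) * hQ'R
        - (((s : PowerSeries R3) + 1) * Rw ^ s * Rw.derivativeFun) * hQR
    have hcast : ((s : PowerSeries R3) + 1) = PowerSeries.C (R := R3) ((s : R3) + 1) := by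
      rw [map_add, map_one, map_natCast]
    rw [hcast] at alg
    have hc := congrArg (PowerSeries.coeff (R := R3) (s + 1)) alg
    rw [map_sub, PowerSeries.coeff_C_mul, PowerSeries.coeff_C_mul, coeff_succ_X_mul,
      coeff_dF] at hc
    have h0 : ((s : R3) + 1) * PowerSeries.coeff (R := R3) (s + 1) (Qw.derivativeFun * Rw ^ (s + 2)) = 0 := by
      rw [hc]; push_cast; ring
    have hne : ((s : R3) + 1) ≠ 0 := by
      have : ((s + 1 : ℕ) : R3) ≠ 0 := Nat.cast_ne_zero.mpr (Nat.succ_ne_zero s)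
      push_cast at this; exact this
    have := mul_eq_zero.mp h0
    simp only [Nat.succ_ne_zero, if_false]
    tauto

lemma swap_sum (u v : PowerSeries R3) (hv : PowerSeries.constantCoeff (R := R3) v = 0)
    (c : ℕ → R3) (r : ℕ) :
    ∑ p ∈ antidiagonal r, PowerSeries.coeff (R := R3) p.1 u *
        (∑ j ∈ range (p.2 + 1), c j * PowerSeries.coeff (R := R3) p.2 (v ^ j))
      = ∑ j ∈ range (r + 1), c j * PowerSeries.coeff (R := R3) r (u * v ^ j) := by
  have h1 : ∀ p ∈ antidiagonal r,
      PowerSeries.coeff (R := R3) p.1 u * (∑ j ∈ range (p.2 + 1), c j * PowerSeries.coeff (R := R3) p.2 (v ^ j))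
        = ∑ j ∈ range (r + 1), PowerSeries.coeff (R := R3) p.1 u * (c j * PowerSeries.coeff (R := R3) p.2 (v ^ j)) := by
    intro p hp
    rw [Finset.HasAntidiagonal.mem_antidiagonal] at hp
    rw [Finset.mul_sum]
    apply Finset.sum_subset
    · intro j hj; rw [Finset.mem_range] at *; omega
    · intro j hj hj2
      rw [Finset.mem_range] at hj hj2
      rw [vanish hv j p.2 (by omega), mul_zero, mul_zero]
  rw [Finset.sum_congr rfl h1, Finset.sum_comm]
  apply Finset.sum_congr rfl
  intro j _
  rw [PowerSeries.coeff_mul, Finset.mul_sum]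
  exact Finset.sum_congr rfl fun p _ => by ring

lemma sum_square_antidiag (n : ℕ) (F : ℕ → ℕ → R3) (hF : ∀ a b, n < a + b → F a b = 0) :
    ∑ a ∈ range (n + 1), ∑ b ∈ range (n + 1), F a b
      = ∑ i ∈ range (n + 1), ∑ p ∈ antidiagonal i, F p.1 p.2 := by
  have hdisj : (↑(range (n + 1)) : Set ℕ).PairwiseDisjoint
      (fun i => (antidiagonal i : Finset (ℕ × ℕ))) := by
    intro i _ j _ hij
    simp only [Finset.disjoint_left]
    intro p hp hq
    rw [Finset.HasAntidiagonal.mem_antidiagonal] at hp hq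
    exact hij (by omega)
  rw [← Finset.sum_biUnion hdisj, ← Finset.sum_product']
  apply (Finset.sum_subset ?_ ?_).symm
  · intro p hp
    rw [Finset.mem_biUnion] at hp
    obtain ⟨i, hi, hpi⟩ := hp
    rw [Finset.HasAntidiagonal.mem_antidiagonal] at hpi
    rw [Finset.mem_range] at hi
    rw [Finset.mem_product, Finset.mem_range, Finset.mem_range]
    omega
  · intro p hp hnp
    rw [Finset.mem_product, Finset.mem_range, Finset.mem_range] at hp
    apply hF
    by_contra hc
    apply hnp
    rw [Finset.mem_biUnion]
    exact ⟨p.1 + p.2, Finset.mem_range.mpr (by omega), Finset.HasAntidiagonal.mem_antidiagonal.mpr rfl⟩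

def comp (P f : PowerSeries R3) : PowerSeries R3 :=
  PowerSeries.mk fun n => ∑ i ∈ range (n + 1),
    PowerSeries.coeff (R := R3) i f * PowerSeries.coeff (R := R3) n (P ^ i)

lemma coeff_comp (P f : PowerSeries R3) (n : ℕ) :
    PowerSeries.coeff (R := R3) n (comp P f) = ∑ i ∈ range (n + 1),
      PowerSeries.coeff (R := R3) i f * PowerSeries.coeff (R := R3) n (P ^ i) := by
  simp [comp, PowerSeries.coeff_mk]

section Pside

variable {P U : PowerSeries R3}

lemma coeff_comp_of_lt (h0 : PowerSeries.constantCoeff (R := R3) P = 0) (f : PowerSeries R3)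
    {n N : ℕ} (h : n < N) :
    PowerSeries.coeff (R := R3) n (comp P f) = ∑ i ∈ range N,
      PowerSeries.coeff (R := R3) i f * PowerSeries.coeff (R := R3) n (P ^ i) := by
  rw [coeff_comp]
  apply Finset.sum_subset
  · intro i hi; rw [Finset.mem_range] at *; omega
  · intro i hi hi2
    rw [Finset.mem_range] at hi hi2
    rw [vanish h0 i n (by omega), mul_zero]

lemma comp_one : comp P 1 = 1 := by
  ext n
  rw [coeff_comp]
  rw [Finset.sum_eq_single 0]
  · simp
  · intro i _ hi
    simp [PowerSeries.coeff_one, hi]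
  · simp

lemma comp_C (a : MvPolynomial (Fin 3) ℚ) : comp P (PowerSeries.C (R := R3) a) = PowerSeries.C (R := R3) a := by
  ext n
  rw [coeff_comp, Finset.sum_eq_single 0]
  · simp only [PowerSeries.coeff_C, pow_zero, PowerSeries.coeff_one]
    split_ifs <;> simp
  · intro i _ hi
    simp [PowerSeries.coeff_C, hi]
  · simp

lemma comp_X (h0 : PowerSeries.constantCoeff (R := R3) P = 0) : comp P X = P := by
  ext n
  rw [coeff_comp, Finset.sum_eq_single 1]
  · simp
  · intro i _ hi
    simp [PowerSeries.coeff_X, hi]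
  · intro h
    rw [Finset.mem_range] at h
    have : n = 0 := by omega
    subst this
    simp [PowerSeries.coeff_zero_eq_constantCoeff_apply, h0]

lemma comp_add (f g : PowerSeries R3) : comp P (f + g) = comp P f + comp P g := by
  ext n
  simp [coeff_comp, add_mul, Finset.sum_add_distrib]

lemma comp_sub (f g : PowerSeries R3) : comp P (f - g) = comp P f - comp P g := by
  ext n
  simp [coeff_comp, sub_mul, Finset.sum_sub_distrib]

lemma comp_mul (h0 : PowerSeries.constantCoeff (R := R3) P = 0) (f g : PowerSeries R3) :
    comp P (f * g) = comp P f * comp P g := by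
  ext n : 1
  rw [PowerSeries.coeff_mul, coeff_comp]
  have hstep : ∀ p ∈ antidiagonal n,
      PowerSeries.coeff (R := R3) p.1 (comp P f) * PowerSeries.coeff (R := R3) p.2 (comp P g)
        = ∑ a ∈ range (n + 1), ∑ b ∈ range (n + 1),
            (PowerSeries.coeff (R := R3) a f * PowerSeries.coeff (R := R3) p.1 (P ^ a))
              * (PowerSeries.coeff (R := R3) b g * PowerSeries.coeff (R := R3) p.2 (P ^ b)) := by
    intro p hp
    rw [Finset.HasAntidiagonal.mem_antidiagonal] at hp
    rw [coeff_comp_of_lt h0 f (show p.1 < n + 1 by omega),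
      coeff_comp_of_lt h0 g (show p.2 < n + 1 by omega), Finset.sum_mul_sum]
  rw [Finset.sum_congr rfl hstep]
  rw [Finset.sum_comm]
  have hstep2 : ∀ a ∈ range (n + 1),
      ∑ p ∈ antidiagonal n, ∑ b ∈ range (n + 1),
          (PowerSeries.coeff (R := R3) a f * PowerSeries.coeff (R := R3) p.1 (P ^ a))
            * (PowerSeries.coeff (R := R3) b g * PowerSeries.coeff (R := R3) p.2 (P ^ b))
        = ∑ b ∈ range (n + 1), PowerSeries.coeff (R := R3) a f * PowerSeries.coeff (R := R3) b g
            * PowerSeries.coeff (R := R3) n (P ^ (a + b)) := by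
    intro a _
    rw [Finset.sum_comm]
    apply Finset.sum_congr rfl
    intro b _
    rw [pow_add, PowerSeries.coeff_mul, Finset.mul_sum]
    exact Finset.sum_congr rfl fun p _ => by ring
  rw [Finset.sum_congr rfl hstep2]
  have hvan : ∀ a b : ℕ, n < a + b → PowerSeries.coeff (R := R3) a f * PowerSeries.coeff (R := R3) b g
      * PowerSeries.coeff (R := R3) n (P ^ (a + b)) = 0 := by
    intro a b hab
    rw [vanish h0 (a + b) n hab, mul_zero]
  rw [sum_square_antidiag n _ hvan]
  apply Finset.sum_congr rfl
  intro i _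
  rw [PowerSeries.coeff_mul, Finset.sum_mul]
  apply Finset.sum_congr rfl
  rintro ⟨a, b⟩ hp
  rw [Finset.HasAntidiagonal.mem_antidiagonal] at hp
  subst hp
  ring

lemma comp_pow (h0 : PowerSeries.constantCoeff (R := R3) P = 0) (f : PowerSeries R3) (j : ℕ) :
    comp P (f ^ j) = comp P f ^ j := by
  induction j with
  | zero => simpa using comp_one
  | succ j ih => rw [pow_succ, pow_succ, comp_mul h0, ih]

end Pside

section Pside2

variable {P U : PowerSeries R3}
variable (h0 : PowerSeries.constantCoeff (R := R3) P = 0)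
  (hP : P * (1 - P) =
      (PowerSeries.X + PowerSeries.C (R := R3) (MvPolynomial.X 0) * P ^ 2) * (1 - P)
        + PowerSeries.C (R := R3) (MvPolynomial.X 1 + MvPolynomial.X 2) * P ^ 3)
  (hU : U * (1 - P) = 1)

include h0 hU in
lemma compT_eq : comp P T = U := by
  have h2 : (1 - P) * comp P T = 1 := by
    have e1 : comp P ((1 - X) * T) = (1 - P) * comp P T := by
      rw [comp_mul h0, comp_sub, comp_one, comp_X h0]
    rw [← e1, hT, comp_one]
  linear_combination U * h2 - comp P T * hU

include h0 hP hU in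
lemma compQ_eq : comp P Qw = X := by
  have hTU := compT_eq h0 hU
  have e : comp P Qw = P * (1 - P * (PowerSeries.C (R := R3) (MvPolynomial.X 0)
      + PowerSeries.C (R := R3) (MvPolynomial.X 1 + MvPolynomial.X 2) * (P * U))) := by
    rw [Qw, comp_mul h0, Ψ, comp_sub, comp_one, comp_mul h0, Γ, comp_add, comp_mul h0,
      comp_mul h0, comp_X h0, hTU, cx, cS, comp_C, comp_C]
  rw [e]
  linear_combination U * hP + (X + PowerSeries.C (R := R3) (MvPolynomial.X 0) * P ^ 2 - P) * hU

include h0 hP hU in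
lemma P_eq : P = X * comp P Rw := by
  have h1 : P * comp P Ψ = X := by
    have := compQ_eq h0 hP hU
    rw [Qw, comp_mul h0, comp_X h0] at this
    exact this
  have h2 : comp P Ψ * comp P Rw = 1 := by rw [← comp_mul h0, hΨR, comp_one]
  linear_combination comp P Rw * h1 - P * h2

include h0 hP hU in
lemma coeff_P_pow (m j : ℕ) :
    PowerSeries.coeff (R := R3) m (P ^ j) =
      if j ≤ m then PowerSeries.coeff (R := R3) (m - j) (comp P (Rw ^ j)) else 0 := by
  have e : P ^ j = X ^ j * comp P (Rw ^ j) := by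
    rw [comp_pow h0, ← mul_pow, ← P_eq h0 hP hU]
  rw [e, PowerSeries.coeff_X_pow_mul']

include h0 hP hU in
lemma dagger : ∀ m i : ℕ,
    PowerSeries.coeff (R := R3) m (comp P (Rw ^ i)) =
      PowerSeries.coeff (R := R3) m (Qw.derivativeFun * Rw ^ (m + i + 1)) := by
  intro m
  induction m using Nat.strong_induction_on with
  | _ m IH =>
    intro i
    rw [coeff_comp]
    have hj : ∀ j ∈ range (m + 1),
        PowerSeries.coeff (R := R3) j (Rw ^ i) * PowerSeries.coeff (R := R3) m (P ^ j)
          = PowerSeries.coeff (R := R3) j (Rw ^ i)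
            * PowerSeries.coeff (R := R3) (m - j) (Qw.derivativeFun * Rw ^ (m + 1)) := by
      intro j hjr
      rw [Finset.mem_range] at hjr
      rw [coeff_P_pow h0 hP hU, if_pos (by omega : j ≤ m)]
      congr 1
      cases j with
      | zero =>
        simp only [Nat.sub_zero]
        rw [pow_zero, comp_one, residue, PowerSeries.coeff_one]
      | succ j =>
        rw [IH (m - (j + 1)) (by omega) (j + 1),
          show m - (j + 1) + (j + 1) + 1 = m + 1 from by omega]
    rw [Finset.sum_congr rfl hj]
    have e : Qw.derivativeFun * Rw ^ (m + i + 1) = Rw ^ i * (Qw.derivativeFun * Rw ^ (m + 1)) := by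
      rw [show m + i + 1 = i + (m + 1) by omega, pow_add]
      ring
    rw [e, PowerSeries.coeff_mul, Finset.Nat.sum_antidiagonal_eq_sum_range_succ_mk]

include h0 hP hU in
lemma transfer (H : PowerSeries R3) (m : ℕ) :
    PowerSeries.coeff (R := R3) m (comp P H) =
      PowerSeries.coeff (R := R3) m (H * (Qw.derivativeFun * Rw ^ (m + 1))) := by
  rw [coeff_comp]
  have hj : ∀ j ∈ range (m + 1),
      PowerSeries.coeff (R := R3) j H * PowerSeries.coeff (R := R3) m (P ^ j)
        = PowerSeries.coeff (R := R3) j H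
          * PowerSeries.coeff (R := R3) (m - j) (Qw.derivativeFun * Rw ^ (m + 1)) := by
    intro j hjr
    rw [Finset.mem_range] at hjr
    rw [coeff_P_pow h0 hP hU, if_pos (by omega : j ≤ m), dagger h0 hP hU,
      show m - j + j + 1 = m + 1 from by omega]
  rw [Finset.sum_congr rfl hj, PowerSeries.coeff_mul,
    Finset.Nat.sum_antidiagonal_eq_sum_range_succ_mk]

include h0 hP hU in
lemma compE_eq : comp P Ew = 1 + X - PowerSeries.C (R := R3) (2 + 2 * MvPolynomial.X 0) * P
    - PowerSeries.C (R := R3) (3 * (MvPolynomial.X 1 + MvPolynomial.X 2) - 3 * MvPolynomial.X 0) * P ^ 2 := by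
  rw [hE_eq, comp_sub, comp_sub, comp_add, comp_one, compQ_eq h0 hP hU, comp_mul h0,
    comp_mul h0, comp_C, comp_C, comp_pow h0, comp_X h0]

include h0 hP hU in
lemma hPprime : P.derivativeFun * comp P Ew = 1 - P := by
  rw [compE_eq h0 hP hU, cE1, cE2, cx, cS]
  have d2 := dpow P 1
  have d3 := dpow P 2
  norm_num at d2 d3
  have hd := congrArg PowerSeries.derivativeFun hP
  simp only [PowerSeries.derivativeFun_mul, PowerSeries.derivativeFun_add, dsub,
    PowerSeries.derivativeFun_one, dF_C, dX, d2, d3, smul_eq_mul] at hd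
  linear_combination hd

include h0 hP hU in
lemma hPU : P.derivativeFun * U = comp P Ei := by
  have h1 := hPprime h0 hP hU
  have h2 : comp P Ew * comp P Ei = 1 := by rw [← comp_mul h0, hEEi, comp_one]
  linear_combination comp P Ei * U * h1 + comp P Ei * hU - P.derivativeFun * U * h2

end Pside2

def Wser (n : ℕ) : PowerSeries R3 :=
  PowerSeries.mk fun r => ∑ j ∈ range (r + 1),
    ((n + j).choose j : R3) * PowerSeries.coeff (R := R3) r ((X * Γ) ^ j)

lemma coeff_Wser (n r : ℕ) :
    PowerSeries.coeff (R := R3) r (Wser n) = ∑ j ∈ range (r + 1),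
      ((n + j).choose j : R3) * PowerSeries.coeff (R := R3) r ((X * Γ) ^ j) := by
  simp [Wser, PowerSeries.coeff_mk]

lemma coeff_B_Wser (n r : ℕ) :
    PowerSeries.coeff (R := R3) r ((X * Γ) * Wser n) = ∑ j ∈ range (r + 1),
      ((n + j).choose j : R3) * PowerSeries.coeff (R := R3) r ((X * Γ) ^ (j + 1)) := by
  rw [PowerSeries.coeff_mul]
  simp only [coeff_Wser]
  rw [swap_sum (X * Γ) (X * Γ) constB _ r]
  exact Finset.sum_congr rfl fun j _ => by rw [pow_succ]; ring_nf

lemma geom_sum_aux (r : ℕ) (b : ℕ → R3) (hb : b (r + 1) = 0) :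
    (∑ j ∈ range (r + 1), b j) - (∑ j ∈ range (r + 1), b (j + 1)) = b 0 := by
  rw [sub_eq_iff_eq_add, Finset.sum_range_succ (fun j => b (j + 1)) r, hb, add_zero,
    Finset.sum_range_succ' (fun j => b j) r]
  ring

lemma pascal_sum (n r : ℕ) (b : ℕ → R3) (hb : b (r + 1) = 0) :
    (∑ j ∈ range (r + 1), ((n + 1 + j).choose j : R3) * b j)
      - (∑ j ∈ range (r + 1), ((n + 1 + j).choose j : R3) * b (j + 1))
    = ∑ j ∈ range (r + 1), ((n + j).choose j : R3) * b j := by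
  rw [sub_eq_iff_eq_add,
    Finset.sum_range_succ (fun j => ((n + 1 + j).choose j : R3) * b (j + 1)) r, hb, mul_zero,
    add_zero, Finset.sum_range_succ' (fun j => ((n + 1 + j).choose j : R3) * b j) r,
    Finset.sum_range_succ' (fun j => ((n + j).choose j : R3) * b j) r]
  have hterm : ∀ i ∈ range r, ((n + 1 + (i + 1)).choose (i + 1) : R3) * b (i + 1)
      = ((n + (i + 1)).choose (i + 1) : R3) * b (i + 1)
        + ((n + 1 + i).choose i : R3) * b (i + 1) := by
    intro i _
    rw [show n + 1 + (i + 1) = (n + 1 + i) + 1 from by omega,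
      Nat.choose_succ_succ (n + 1 + i) i,
      show n + 1 + i = n + (i + 1) from by omega, Nat.cast_add, add_mul]
    ring
  rw [Finset.sum_congr rfl hterm, Finset.sum_add_distrib]
  simp only [Nat.choose_zero_right, Nat.cast_one, one_mul, add_zero]
  ring

lemma PsiW0 : Ψ * Wser 0 = 1 := by
  ext r : 1
  rw [Ψ, sub_mul, one_mul, map_sub, coeff_Wser, coeff_B_Wser]
  simp only [zero_add, Nat.choose_self, Nat.cast_one, one_mul]
  rw [geom_sum_aux r (fun j => PowerSeries.coeff (R := R3) r ((X * Γ) ^ j))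
    (vanish constB (r + 1) r (by omega))]
  simp

lemma PsiWsucc (n : ℕ) : Ψ * Wser (n + 1) = Wser n := by
  ext r : 1
  rw [Ψ, sub_mul, one_mul, map_sub, coeff_Wser, coeff_B_Wser, coeff_Wser]
  exact pascal_sum n r (fun j => PowerSeries.coeff (R := R3) r ((X * Γ) ^ j))
    (vanish constB (r + 1) r (by omega))

lemma RpowW : ∀ n : ℕ, Rw ^ (n + 1) = Wser n := by
  intro n
  induction n with
  | zero =>
    rw [pow_one]
    linear_combination Wser 0 * hΨR - Rw * PsiW0
  | succ n ih =>
    have e : Rw ^ (n + 2) = Rw ^ (n + 1) * Rw := by ring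
    rw [e, ih]
    linear_combination Wser (n + 1) * hΨR - Rw * PsiWsucc n

lemma nat_hockey (s : ℕ) : ∀ u : ℕ,
    (∑ a ∈ range (u + 1), (a + s).choose s) = (u + s + 1).choose (s + 1) := by
  intro u
  induction u with
  | zero => simp
  | succ u ih =>
    rw [Finset.sum_range_succ, ih, show u + 1 + s + 1 = (u + s + 1) + 1 from by omega,
      Nat.choose_succ_succ (u + s + 1) s, show u + 1 + s = u + s + 1 from by omega]
    simp only [Nat.succ_eq_add_one]
    omega

lemma coeff_T_pow : ∀ s u : ℕ, PowerSeries.coeff (R := R3) u (T ^ (s + 1)) = ((u + s).choose s : R3) := by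
  intro s
  induction s with
  | zero => intro u; simp [T, PowerSeries.coeff_mk]
  | succ s ih =>
    intro u
    rw [pow_succ, PowerSeries.coeff_mul, Finset.Nat.sum_antidiagonal_eq_sum_range_succ_mk]
    have hterm : ∀ a ∈ range (u + 1),
        PowerSeries.coeff (R := R3) a (T ^ (s + 1)) * PowerSeries.coeff (R := R3) (u - a) T
          = ((a + s).choose s : R3) := by
      intro a _
      rw [ih a]
      simp [T, PowerSeries.coeff_mk]
    rw [Finset.sum_congr rfl hterm, ← Nat.cast_sum, nat_hockey s u,
      show u + s + 1 = u + (s + 1) from by omega]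

lemma coeff_T_R (n' : ℕ) :
    PowerSeries.coeff (R := R3) n' (T * Rw ^ (n' + 1)) = ∑ j ∈ range (n' + 1),
      ((n' + j).choose j : R3) * PowerSeries.coeff (R := R3) n' (T * (X * Γ) ^ j) := by
  rw [RpowW, PowerSeries.coeff_mul]
  simp only [coeff_Wser]
  rw [swap_sum T (X * Γ) constB _ n']

lemma coeff_T_Gamma (d j : ℕ) :
    PowerSeries.coeff (R := R3) d (T * Γ ^ j) = ∑ t ∈ range (j + 1),
      (j.choose t : R3) * ((MvPolynomial.X 0) ^ (j - t)
          * (MvPolynomial.X 1 + MvPolynomial.X 2) ^ t)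
        * (if t ≤ d then (d.choose t : R3) else 0) := by
  have hG : Γ ^ j = ∑ t ∈ range (j + 1),
      (cS * (X * T)) ^ t * cx ^ (j - t) * ((j.choose t : ℕ) : PowerSeries R3) := by
    rw [Γ, add_comm]
    exact add_pow _ _ j
  rw [hG, Finset.mul_sum, map_sum]
  apply Finset.sum_congr rfl
  intro t _
  have e : T * ((cS * (X * T)) ^ t * cx ^ (j - t) * ((j.choose t : ℕ) : PowerSeries R3))
      = PowerSeries.C (R := R3) ((j.choose t : R3) * ((MvPolynomial.X 0) ^ (j - t)
          * (MvPolynomial.X 1 + MvPolynomial.X 2) ^ t)) * (X ^ t * T ^ (t + 1)) := by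
    rw [map_mul, map_mul, map_pow, map_pow, map_natCast, cx, cS]
    ring
  rw [e, PowerSeries.coeff_C_mul, PowerSeries.coeff_X_pow_mul']
  by_cases h : t ≤ d
  · rw [if_pos h, if_pos h, coeff_T_pow, Nat.sub_add_cancel h]
  · rw [if_neg h, if_neg h]

lemma coeff_T_B (n' j : ℕ) (hj : j ≤ n') :
    PowerSeries.coeff (R := R3) n' (T * (X * Γ) ^ j) = ∑ t ∈ range (j + 1),
      (j.choose t : R3) * ((MvPolynomial.X 0) ^ (j - t)
          * (MvPolynomial.X 1 + MvPolynomial.X 2) ^ t)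
        * (if t ≤ n' - j then ((n' - j).choose t : R3) else 0) := by
  rw [mul_pow, show T * (X ^ j * Γ ^ j) = X ^ j * (T * Γ ^ j) from by ring,
    PowerSeries.coeff_X_pow_mul', if_pos hj, coeff_T_Gamma]

lemma mon_eq_iff (a b c k l m : ℕ) :
    (Finsupp.single (0 : Fin 3) a + Finsupp.single 1 b + Finsupp.single 2 c = mon k l m)
      ↔ a = k ∧ b = l ∧ c = m := by
  constructor
  · intro h
    have h0 := DFunLike.congr_fun h (0 : Fin 3)
    have h1 := DFunLike.congr_fun h (1 : Fin 3)
    have h2 := DFunLike.congr_fun h (2 : Fin 3)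
    simp [mon, Finsupp.add_apply, Finsupp.single_apply, Fin.ext_iff] at h0 h1 h2
    exact ⟨h0, h1, h2⟩
  · rintro ⟨rfl, rfl, rfl⟩; rfl

lemma coeff_mono3 (a b c k l m : ℕ) :
    MvPolynomial.coeff (mon k l m)
        ((MvPolynomial.X 0 : R3) ^ a * MvPolynomial.X 1 ^ b * MvPolynomial.X 2 ^ c)
      = if a = k ∧ b = l ∧ c = m then 1 else 0 := by
  rw [MvPolynomial.X_pow_eq_monomial, MvPolynomial.X_pow_eq_monomial,
    MvPolynomial.X_pow_eq_monomial, MvPolynomial.monomial_mul, MvPolynomial.monomial_mul,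
    MvPolynomial.coeff_monomial]
  simp only [one_mul]
  by_cases h : a = k ∧ b = l ∧ c = m
  · rw [if_pos ((mon_eq_iff a b c k l m).mpr h), if_pos h]
  · rw [if_neg (fun hc => h ((mon_eq_iff a b c k l m).mp hc)), if_neg h]

lemma mcoeff (a t k l m : ℕ) :
    MvPolynomial.coeff (mon k l m)
        ((MvPolynomial.X 0) ^ a * (MvPolynomial.X 1 + MvPolynomial.X 2) ^ t : R3)
      = if a = k ∧ t = l + m then ((l + m).choose l : ℚ) else 0 := by
  rw [add_pow, Finset.mul_sum, MvPolynomial.coeff_sum]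
  have hterm : ∀ i ∈ range (t + 1),
      MvPolynomial.coeff (mon k l m) ((MvPolynomial.X 0 : R3) ^ a
          * ((MvPolynomial.X 1) ^ i * (MvPolynomial.X 2) ^ (t - i) * (t.choose i : R3)))
        = (t.choose i : ℚ) * (if a = k ∧ i = l ∧ t - i = m then 1 else 0) := by
    intro i _
    have e : (MvPolynomial.X 0 : R3) ^ a
        * ((MvPolynomial.X 1) ^ i * (MvPolynomial.X 2) ^ (t - i) * (t.choose i : R3))
        = MvPolynomial.C ((t.choose i : ℚ))
          * ((MvPolynomial.X 0) ^ a * (MvPolynomial.X 1) ^ i * (MvPolynomial.X 2) ^ (t - i)) := by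
      rw [map_natCast MvPolynomial.C (t.choose i)]
      ring
    rw [e, MvPolynomial.coeff_C_mul, coeff_mono3]
  rw [Finset.sum_congr rfl hterm]
  by_cases h : a = k ∧ t = l + m
  · obtain ⟨rfl, rfl⟩ := h
    rw [Finset.sum_eq_single l]
    · rw [if_pos ⟨rfl, rfl, by omega⟩, if_pos ⟨rfl, rfl⟩, mul_one]
    · intro i _ hi
      rw [if_neg (fun hc => hi hc.2.1), mul_zero]
    · intro hl
      exfalso
      exact hl (Finset.mem_range.mpr (by omega))
  · rw [if_neg h]
    apply Finset.sum_eq_zero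
    intro i hi
    rw [Finset.mem_range] at hi
    rw [if_neg, mul_zero]
    rintro ⟨h1, h2, h3⟩
    exact h ⟨h1, by omega⟩

lemma mult4_eq (a k l m : ℕ) :
    mult4 a k l m = (a + (k + l + m)).choose (k + l + m)
      * ((k + l + m).choose (l + m) * (l + m).choose l) := by
  have h3 := Nat.choose_mul_factorial_mul_factorial (show l ≤ l + m by omega)
  have h2 := Nat.choose_mul_factorial_mul_factorial (show l + m ≤ k + l + m by omega)
  have h1 := Nat.choose_mul_factorial_mul_factorial (show k + l + m ≤ a + (k + l + m) by omega)
  rw [show l + m - l = m from by omega] at h3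
  rw [show k + l + m - (l + m) = k from by omega] at h2
  rw [Nat.add_sub_cancel] at h1
  rw [mult4]
  have key : (a + k + l + m).factorial
      = ((a + (k + l + m)).choose (k + l + m)
          * ((k + l + m).choose (l + m) * (l + m).choose l))
        * (a.factorial * k.factorial * l.factorial * m.factorial) := by
    rw [show a + k + l + m = a + (k + l + m) from by omega, ← h1, ← h2, ← h3]
    ring
  rw [key]
  exact Nat.mul_div_cancel _ (by positivity)

theorem final
    (P : PowerSeries R3)
    (h0 : PowerSeries.constantCoeff (R := R3) P = 0)
    (hP : P * (1 - P) =
      (PowerSeries.X + PowerSeries.C (R := R3) (MvPolynomial.X 0) * P ^ 2) * (1 - P)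
        + PowerSeries.C (R := R3) (MvPolynomial.X 1 + MvPolynomial.X 2) * P ^ 3)
    (U : PowerSeries R3) (hU : U * (1 - P) = 1)
    (n k l m : ℕ) (hn : 1 ≤ n) :
    pc n k l m (PowerSeries.X * PowerSeries.derivativeFun P * U) =
      (mult4 (n - 1) k l m : ℚ) * (binZ ((n : ℤ) - 1 - k - l - m) ((l : ℤ) + m) : ℚ) := by
  obtain ⟨n', rfl⟩ : ∃ n', n = n' + 1 := ⟨n - 1, by omega⟩
  rw [pc, mul_assoc, PowerSeries.coeff_succ_X_mul, hPU h0 hP hU, transfer h0 hP hU Ei n',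
    show Ei * (Qw.derivativeFun * Rw ^ (n' + 1)) = (Qw.derivativeFun * Ei) * Rw ^ (n' + 1)
      from by ring, hQ'Ei]
  have e1 : PowerSeries.coeff (R := R3) n' (T * Rw ^ (n' + 1))
      = ∑ j ∈ range (n' + 1), ∑ t ∈ range (j + 1),
          ((n' + j).choose j : R3) * ((j.choose t : R3)
            * ((MvPolynomial.X 0) ^ (j - t) * (MvPolynomial.X 1 + MvPolynomial.X 2) ^ t)
            * (if t ≤ n' - j then ((n' - j).choose t : R3) else 0)) := by
    rw [coeff_T_R]
    apply Finset.sum_congr rfl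
    intro j hj
    rw [Finset.mem_range] at hj
    rw [coeff_T_B n' j (by omega), Finset.mul_sum]
  rw [e1, MvPolynomial.coeff_sum]
  simp only [MvPolynomial.coeff_sum]
  have hterm : ∀ j ∈ range (n' + 1), ∀ t ∈ range (j + 1),
      MvPolynomial.coeff (mon k l m) (((n' + j).choose j : R3) * ((j.choose t : R3)
          * ((MvPolynomial.X 0) ^ (j - t) * (MvPolynomial.X 1 + MvPolynomial.X 2) ^ t)
          * (if t ≤ n' - j then ((n' - j).choose t : R3) else 0)))
        = (if t ≤ n' - j then (((n' + j).choose j * j.choose t * (n' - j).choose t : ℕ) : ℚ)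
              else 0)
          * (if j - t = k ∧ t = l + m then ((l + m).choose l : ℚ) else 0) := by
    intro j _ t _
    by_cases hc : t ≤ n' - j
    · rw [if_pos hc, if_pos hc]
      have e : ((n' + j).choose j : R3) * ((j.choose t : R3)
          * ((MvPolynomial.X 0) ^ (j - t) * (MvPolynomial.X 1 + MvPolynomial.X 2) ^ t)
          * ((n' - j).choose t : R3))
          = MvPolynomial.C ((((n' + j).choose j * j.choose t * (n' - j).choose t : ℕ)) : ℚ)
            * ((MvPolynomial.X 0) ^ (j - t) * (MvPolynomial.X 1 + MvPolynomial.X 2) ^ t) := by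
        rw [map_natCast MvPolynomial.C]
        push_cast
        ring
      rw [e, MvPolynomial.coeff_C_mul, mcoeff]
    · rw [if_neg hc, if_neg hc]
      simp
  rw [Finset.sum_congr rfl (fun j hj => Finset.sum_congr rfl (fun t ht => hterm j hj t ht))]
  have hcoeffsum : ∀ t ∈ range (n' + 1), True := fun _ _ => trivial
  by_cases hA : k + l + m ≤ n'
  · have hjzero : ∀ j ∈ range (n' + 1), j ≠ k + l + m →
        (∑ t ∈ range (j + 1),
          (if t ≤ n' - j then (((n' + j).choose j * j.choose t * (n' - j).choose t : ℕ) : ℚ)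
              else 0)
          * (if j - t = k ∧ t = l + m then ((l + m).choose l : ℚ) else 0)) = 0 := by
      intro j _ hj
      apply Finset.sum_eq_zero
      intro t ht
      rw [Finset.mem_range] at ht
      have hne : ¬(j - t = k ∧ t = l + m) := by
        rintro ⟨hx1, hx2⟩
        exact hj (by omega)
      rw [if_neg hne, mul_zero]
    rw [Finset.sum_eq_single_of_mem (k + l + m) (Finset.mem_range.mpr (by omega)) hjzero]
    have htzero : ∀ t ∈ range (k + l + m + 1), t ≠ l + m →
        (if t ≤ n' - (k + l + m)
            then (((n' + (k + l + m)).choose (k + l + m) * (k + l + m).choose t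
              * (n' - (k + l + m)).choose t : ℕ) : ℚ) else 0)
          * (if k + l + m - t = k ∧ t = l + m then ((l + m).choose l : ℚ) else 0) = 0 := by
      intro t _ ht
      rw [if_neg (show ¬(k + l + m - t = k ∧ t = l + m) from fun hx => ht hx.2), mul_zero]
    rw [Finset.sum_eq_single_of_mem (l + m) (Finset.mem_range.mpr (by omega)) htzero]
    rw [if_pos (show k + l + m - (l + m) = k ∧ l + m = l + m from ⟨by omega, rfl⟩)]
    by_cases hc : l + m ≤ n' - (k + l + m)
    · rw [if_pos hc]
      have hbz : binZ ((↑(n' + 1) : ℤ) - 1 - ↑k - ↑l - ↑m) ((l : ℤ) + ↑m)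
          = ((n' - (k + l + m)).choose (l + m) : ℤ) := by
        rw [binZ, if_pos (by constructor <;> omega)]
        have e1' : ((↑(n' + 1) : ℤ) - 1 - ↑k - ↑l - ↑m).toNat = n' - (k + l + m) := by omega
        have e2' : ((l : ℤ) + ↑m).toNat = l + m := by omega
        rw [e1', e2']
      rw [hbz, mult4_eq]
      push_cast
      ring
    · rw [if_neg hc, zero_mul]
      have hbz : binZ ((↑(n' + 1) : ℤ) - 1 - ↑k - ↑l - ↑m) ((l : ℤ) + ↑m) = 0 := by
        rw [binZ, if_neg]
        rintro ⟨-, hle⟩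
        omega
      rw [hbz]
      simp
  · rw [Finset.sum_eq_zero]
    · have hbz : binZ ((↑(n' + 1) : ℤ) - 1 - ↑k - ↑l - ↑m) ((l : ℤ) + ↑m) = 0 := by
        rw [binZ, if_neg]
        rintro ⟨-, hle⟩
        omega
      rw [hbz]
      simp
    · intro j hj
      rw [Finset.mem_range] at hj
      apply Finset.sum_eq_zero
      intro t ht
      rw [Finset.mem_range] at ht
      have hne : ¬(j - t = k ∧ t = l + m) := by
        rintro ⟨hx1, hx2⟩
        exact hA (by omega)
      rw [if_neg hne, mul_zero]

end St19

/-- Let `P = P(z,x,y₁,y₂)` be the power series satisfying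
`P = z + x·P² + (y₁+y₂)·P³/(1−P)` (stated multiplied through by `1−P`), and let
`U = (1−P)⁻¹`.  For `n ≥ 1` the coefficient of `z^n x^k y₁^ℓ y₂^m` in
`z·P'/(1−P)` (derivative with respect to `z`) equals
`multinomial(n−1+k+ℓ+m; n−1,k,ℓ,m)·binomial(n−1−k−ℓ−m, ℓ+m)`. -/
theorem coeff_zP_over_one_sub_P
    (P : PowerSeries R3)
    (h0 : PowerSeries.constantCoeff (R := R3) P = 0)
    (hP : P * (1 - P) =
      (PowerSeries.X + PowerSeries.C (R := R3) (MvPolynomial.X 0) * P ^ 2) * (1 - P)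
        + PowerSeries.C (R := R3) (MvPolynomial.X 1 + MvPolynomial.X 2) * P ^ 3)
    (U : PowerSeries R3) (hU : U * (1 - P) = 1)
    (n k l m : ℕ) (hn : 1 ≤ n) :
    pc n k l m (PowerSeries.X * PowerSeries.derivativeFun P * U) =
      (mult4 (n - 1) k l m : ℚ) * (binZ ((n : ℤ) - 1 - k - l - m) ((l : ℤ) + m) : ℚ) :=
  St19.final P h0 hP U hU n k l m hn

end
end
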